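/- arXiv:2507.11891 — 2 statements merged into one kernel-verified Lean document; each statement's English description precedes it below -/
import Mathlib

section
/- For any 0 ≤ α ≤ 1, when the UCB algorithm UCB_α runs jointly with any other algorithm A under data sharing, the sum of the expected regrets of the two algorithms satisfies E[R_T(UCB_α | (A, UCB_α))] + E[R_T(A | (A, UCB_α))] = Ω(log T) if α = 0, and Ω(T^α) if 0 < α ≤ 1. -/
open MeasureTheory ProbabilityTheory Finset

namespace BanditAB

/-- A history: the list of reward samples collected so far, for each arm. -/
abbrev Hist (K : ℕ) := Fin K → List ℝ

/-- Empirical mean of a list of samples. -/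
noncomputable def empMean (l : List ℝ) : ℝ := l.sum / l.length

/-- Total number of samples in a history. -/
def totalCount {K : ℕ} (h : Hist K) : ℕ := ∑ k, (h k).length

/-- An arm maximizing an `EReal`-valued score (ties broken by a fixed rule). -/
noncomputable def argmaxArm {K : ℕ} [NeZero K] (f : Fin K → EReal) : Fin K :=
  (List.argmax f (List.finRange K)).getD ⟨0, Nat.pos_of_ne_zero (NeZero.ne K)⟩

/-- Greedy score: empirical mean of the samples of an arm, `⊤` if the arm has no samples. -/
noncomputable def greedyScore {K : ℕ} (h : Hist K) (k : Fin K) : EReal :=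
  if h k = [] then ⊤ else ((empMean (h k) : ℝ) : EReal)

/-- The arm chosen by the greedy rule: highest empirical mean (empty history counts as `+∞`). -/
noncomputable def greedyArm {K : ℕ} [NeZero K] (h : Hist K) : Fin K :=
  argmaxArm (greedyScore h)

/-- The UCB confidence-bound width, for a total sample count `n` and per-arm count `s`:
`sqrt (2 log n / s)` for `α = 0` and `sqrt (2 (n^α - 1) / (α s))` for `α ≠ 0`. -/
noncomputable def ucbWidth (α : ℝ) (n s : ℕ) : ℝ :=
  if α = 0 then Real.sqrt (2 * Real.log n / s)
  else Real.sqrt (2 * ((n : ℝ) ^ α - 1) / (α * s))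

/-- UCB score of an arm: empirical mean plus confidence width, `⊤` if the arm has no samples. -/
noncomputable def ucbScore {K : ℕ} (α : ℝ) (h : Hist K) (k : Fin K) : EReal :=
  if h k = [] then ⊤
  else (((empMean (h k) + ucbWidth α (totalCount h) (h k).length : ℝ)) : EReal)

/-- The arm chosen by the UCB rule. -/
noncomputable def ucbArm {K : ℕ} [NeZero K] (α : ℝ) (h : Hist K) : Fin K :=
  argmaxArm (ucbScore α h)

/-- A (possibly randomized) algorithm: a map from a history and a uniform random seed
in `[0,1]` to an arm. -/
abbrev Alg (K : ℕ) := Hist K → ℝ → Fin K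

/-- The greedy algorithm (ignores its random seed). -/
noncomputable def grd {K : ℕ} [NeZero K] : Alg K := fun h _ => greedyArm h

/-- The UCB algorithm with exploration parameter `α` (ignores its random seed). -/
noncomputable def ucb {K : ℕ} [NeZero K] (α : ℝ) : Alg K := fun h _ => ucbArm α h

/-- Map a value `v ∈ [0,1)` to a uniformly distributed arm. -/
noncomputable def uniformArm {K : ℕ} [NeZero K] (v : ℝ) : Fin K :=
  ⟨min (K - 1) ⌊v * K⌋₊,
    lt_of_le_of_lt (min_le_left _ _) (Nat.sub_lt (Nat.pos_of_ne_zero (NeZero.ne K)) one_pos)⟩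

/-- The ε-greedy algorithm with parameters `α, C`: with probability
`ε = min {1, C / |H|^(1-α)}` it pulls a uniformly random arm, otherwise it is greedy;
if some arm has no samples it forgoes exploration and pulls an arm with no history. -/
noncomputable def epsGreedy {K : ℕ} [NeZero K] (α C : ℝ) : Alg K := fun h u =>
  if ∃ k, h k = [] then greedyArm h
  else
    let ε : ℝ := min 1 (C / (totalCount h : ℝ) ^ (1 - α))
    if u < ε then uniformArm (u / ε) else greedyArm h

/-- The mean reward of arm `k`, for reward distributions `D`. -/
noncomputable def armMean {K : ℕ} (D : Fin K → Measure ℝ) (k : Fin K) : ℝ := ∫ x, x ∂(D k)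

/-- The minimum gap `Δ_min = min_{k ≠ k*} (μ* - μ_k)`. -/
noncomputable def minGap {K : ℕ} (D : Fin K → Measure ℝ) (kstar : Fin K) : ℝ :=
  ⨅ k : {j : Fin K // j ≠ kstar}, (armMean D kstar - armMean D k.1)

/-- The environment hypotheses: the reward tapes `X k s` (the `s`-th reward sample of arm
`k`) are distributed according to `D k` (supported on `[0,1]`), the algorithms' seeds
`U i t` are uniform on `[0,1]`, and all of these random variables are mutually independent. -/
def IsEnv {K : ℕ} {Ω : Type*} [MeasurableSpace Ω] (P : Measure Ω)
    (X : Fin K → ℕ → Ω → ℝ) (U : Fin 2 → ℕ → Ω → ℝ) (D : Fin K → Measure ℝ) : Prop :=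
  (∀ k, IsProbabilityMeasure (D k)) ∧
  (∀ k, D k (Set.Icc (0:ℝ) 1)ᶜ = 0) ∧
  (∀ k s, Measurable (X k s)) ∧
  (∀ i t, Measurable (U i t)) ∧
  (∀ k s, Measure.map (X k s) P = D k) ∧
  (∀ i t, Measure.map (U i t) P = volume.restrict (Set.Icc (0:ℝ) 1)) ∧
  iIndepFun
    (Sum.elim (fun p : Fin K × ℕ => X p.1 p.2) (fun p : Fin 2 × ℕ => U p.1 p.2)) P

/-- Append a new sample `y` for arm `k` to the history `h`. -/
noncomputable def push {K : ℕ} (h : Hist K) (k : Fin K) (y : ℝ) : Hist K :=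
  Function.update h k (h k ++ [y])

variable {K : ℕ} [NeZero K] {Ω : Type*}

/-- The shared history of a joint run of two algorithms under data sharing: at each timestep,
both algorithms select arms based on the shared history, each observes a fresh reward from
the tape of its chosen arm, and both samples are added to the shared history. -/
noncomputable def jointHist (X : Fin K → ℕ → Ω → ℝ) (U : Fin 2 → ℕ → Ω → ℝ)
    (A₁ A₂ : Alg K) : ℕ → Ω → Hist K
  | 0, _ => fun _ => []
  | t + 1, ω =>
    let h := jointHist X U A₁ A₂ t ω
    let i1 := A₁ h (U 0 t ω)
    let h1 := push h i1 (X i1 (h i1).length ω)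
    let i2 := A₂ h (U 1 t ω)
    push h1 i2 (X i2 (h1 i2).length ω)

/-- The arm pulled by the first algorithm at timestep `t` in the joint run. -/
noncomputable def arm1 (X : Fin K → ℕ → Ω → ℝ) (U : Fin 2 → ℕ → Ω → ℝ)
    (A₁ A₂ : Alg K) (t : ℕ) (ω : Ω) : Fin K :=
  A₁ (jointHist X U A₁ A₂ t ω) (U 0 t ω)

/-- The arm pulled by the second algorithm at timestep `t` in the joint run. -/
noncomputable def arm2 (X : Fin K → ℕ → Ω → ℝ) (U : Fin 2 → ℕ → Ω → ℝ)
    (A₁ A₂ : Alg K) (t : ℕ) (ω : Ω) : Fin K :=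
  A₂ (jointHist X U A₁ A₂ t ω) (U 1 t ω)

/-- The reward received by the first algorithm at timestep `t` in the joint run. -/
noncomputable def reward1 (X : Fin K → ℕ → Ω → ℝ) (U : Fin 2 → ℕ → Ω → ℝ)
    (A₁ A₂ : Alg K) (t : ℕ) (ω : Ω) : ℝ :=
  X (arm1 X U A₁ A₂ t ω) ((jointHist X U A₁ A₂ t ω (arm1 X U A₁ A₂ t ω)).length) ω

/-- The reward received by the second algorithm at timestep `t` in the joint run. -/
noncomputable def reward2 (X : Fin K → ℕ → Ω → ℝ) (U : Fin 2 → ℕ → Ω → ℝ)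
    (A₁ A₂ : Alg K) (t : ℕ) (ω : Ω) : ℝ :=
  let h := jointHist X U A₁ A₂ t ω
  let h1 := push h (arm1 X U A₁ A₂ t ω) (reward1 X U A₁ A₂ t ω)
  X (arm2 X U A₁ A₂ t ω) ((h1 (arm2 X U A₁ A₂ t ω)).length) ω

variable [MeasurableSpace Ω]

/-- The expected regret of the first algorithm over horizon `T` in the joint run, with
respect to the best mean `μstar`. -/
noncomputable def expRegret1 (P : Measure Ω) (X : Fin K → ℕ → Ω → ℝ)
    (U : Fin 2 → ℕ → Ω → ℝ) (A₁ A₂ : Alg K) (μstar : ℝ) (T : ℕ) : ℝ :=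
  T * μstar - ∫ ω, (∑ t ∈ Finset.range T, reward1 X U A₁ A₂ t ω) ∂P

/-- The expected regret of the second algorithm over horizon `T` in the joint run. -/
noncomputable def expRegret2 (P : Measure Ω) (X : Fin K → ℕ → Ω → ℝ)
    (U : Fin 2 → ℕ → Ω → ℝ) (A₁ A₂ : Alg K) (μstar : ℝ) (T : ℕ) : ℝ :=
  T * μstar - ∫ ω, (∑ t ∈ Finset.range T, reward2 X U A₁ A₂ t ω) ∂P

/-- The number of pulls of arm `k` by the first algorithm in the first `T` timesteps of the
joint run. -/
noncomputable def pulls1 (X : Fin K → ℕ → Ω → ℝ) (U : Fin 2 → ℕ → Ω → ℝ)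
    (A₁ A₂ : Alg K) (k : Fin K) (T : ℕ) (ω : Ω) : ℕ :=
  ((Finset.range T).filter fun t => arm1 X U A₁ A₂ t ω = k).card

/-- The history of a single algorithm running individually (no data sharing). -/
noncomputable def soloHist (X : Fin K → ℕ → Ω → ℝ) (U : Fin 2 → ℕ → Ω → ℝ)
    (A : Alg K) : ℕ → Ω → Hist K
  | 0, _ => fun _ => []
  | t + 1, ω =>
    let h := soloHist X U A t ω
    let i := A h (U 0 t ω)
    push h i (X i (h i).length ω)

/-- The reward received at timestep `t` by a single algorithm running individually. -/
noncomputable def soloReward (X : Fin K → ℕ → Ω → ℝ) (U : Fin 2 → ℕ → Ω → ℝ)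
    (A : Alg K) (t : ℕ) (ω : Ω) : ℝ :=
  let h := soloHist X U A t ω
  let i := A h (U 0 t ω)
  X i (h i).length ω

/-- The expected regret over horizon `T` of a single algorithm running individually. -/
noncomputable def soloExpRegret (P : Measure Ω) (X : Fin K → ℕ → Ω → ℝ)
    (U : Fin 2 → ℕ → Ω → ℝ) (A : Alg K) (μstar : ℝ) (T : ℕ) : ℝ :=
  T * μstar - ∫ ω, (∑ t ∈ Finset.range T, soloReward X U A t ω) ∂P


/-- One-way data sharing from `A` to greedy: the pair of histories
(shared history used by greedy, own history of `A`). At each timestep, `A` selects an arm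
based on its own history only, greedy selects an arm based on the shared history, and both
new samples are added to the shared history while only `A`'s sample is added to its own. -/
noncomputable def oneWayHists (X : Fin K → ℕ → Ω → ℝ) (U : Fin 2 → ℕ → Ω → ℝ)
    (A : Alg K) : ℕ → Ω → Hist K × Hist K
  | 0, _ => (fun _ => [], fun _ => [])
  | t + 1, ω =>
    let s := oneWayHists X U A t ω
    let h := s.1
    let hA := s.2
    let iA := A hA (U 1 t ω)
    let yA := X iA (h iA).length ω
    let h1 := push h iA yA
    let iG := greedyArm h
    let yG := X iG (h1 iG).length ω
    (push h1 iG yG, push hA iA yA)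

/-- The arm pulled by algorithm `A` at timestep `t` under one-way data sharing to greedy. -/
noncomputable def oneWayArmA (X : Fin K → ℕ → Ω → ℝ) (U : Fin 2 → ℕ → Ω → ℝ)
    (A : Alg K) (t : ℕ) (ω : Ω) : Fin K :=
  A (oneWayHists X U A t ω).2 (U 1 t ω)

/-- The arm pulled by the greedy algorithm at timestep `t` under one-way data sharing. -/
noncomputable def oneWayArmG (X : Fin K → ℕ → Ω → ℝ) (U : Fin 2 → ℕ → Ω → ℝ)
    (A : Alg K) (t : ℕ) (ω : Ω) : Fin K :=
  greedyArm (oneWayHists X U A t ω).1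

/-- The reward received by the greedy algorithm at timestep `t` under one-way data sharing. -/
noncomputable def oneWayGrdReward (X : Fin K → ℕ → Ω → ℝ) (U : Fin 2 → ℕ → Ω → ℝ)
    (A : Alg K) (t : ℕ) (ω : Ω) : ℝ :=
  let h := (oneWayHists X U A t ω).1
  let iA := oneWayArmA X U A t ω
  let h1 := push h iA (X iA (h iA).length ω)
  X (oneWayArmG X U A t ω) ((h1 (oneWayArmG X U A t ω)).length) ω

/-- The number of pulls of arm `k` by algorithm `A` in the first `T` timesteps under
one-way data sharing. -/
noncomputable def oneWayPullsA (X : Fin K → ℕ → Ω → ℝ) (U : Fin 2 → ℕ → Ω → ℝ)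
    (A : Alg K) (k : Fin K) (T : ℕ) (ω : Ω) : ℕ :=
  ((Finset.range T).filter fun t => oneWayArmA X U A t ω = k).card

/-- The expected regret of the greedy algorithm over horizon `T` under one-way data
sharing from `A` to greedy. -/
noncomputable def oneWayGrdExpRegret [MeasurableSpace Ω] (P : Measure Ω)
    (X : Fin K → ℕ → Ω → ℝ) (U : Fin 2 → ℕ → Ω → ℝ) (A : Alg K) (μstar : ℝ) (T : ℕ) : ℝ :=
  T * μstar - ∫ ω, (∑ t ∈ Finset.range T, oneWayGrdReward X U A t ω) ∂P

/-- EXP3 exploration rate at (1-indexed) timestep `t`: `min {1/K, K^(-2/3) t^(-1/3)}`. -/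
noncomputable def exp3eps (K t : ℕ) : ℝ :=
  min (1 / (K : ℝ)) ((K : ℝ) ^ (-(2:ℝ)/3) * (t : ℝ) ^ (-(1:ℝ)/3))

/-- EXP3 sampling probability of arm `k` at (1-indexed) timestep `t`, given the cumulative
importance-weighted reward estimates `Yhat`. -/
noncomputable def exp3prob {K : ℕ} (t : ℕ) (Yhat : Fin K → ℝ) (k : Fin K) : ℝ :=
  (1 - K * exp3eps K t) * Real.exp (exp3eps K (t - 1) * Yhat k)
      / (∑ k', Real.exp (exp3eps K (t - 1) * Yhat k'))
    + exp3eps K t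

/-- Sample from the categorical distribution with weights `ρ` using a uniform seed `u`:
returns the arm `k` whose cumulative-probability interval contains `u`. -/
noncomputable def sampleCat {K : ℕ} [NeZero K] (ρ : Fin K → ℝ) (u : ℝ) : Fin K :=
  let cum : Fin K → ℝ := fun k => ∑ j ∈ Finset.univ.filter (fun j : Fin K => (j:ℕ) < (k:ℕ)), ρ j
  if h : (Finset.univ.filter fun k => cum k ≤ u).Nonempty
  then (Finset.univ.filter fun k => cum k ≤ u).max' h
  else ⟨0, Nat.pos_of_ne_zero (NeZero.ne K)⟩

/-- The state of a joint run of EXP3 and greedy under one-way data sharing (EXP3 → grd):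
the shared history (used by greedy) and EXP3's cumulative importance-weighted reward
estimates `Ŷ` (built from EXP3's own data only). -/
noncomputable def exp3State (X : Fin K → ℕ → Ω → ℝ) (U : Fin 2 → ℕ → Ω → ℝ) :
    ℕ → Ω → Hist K × (Fin K → ℝ)
  | 0, _ => (fun _ => [], fun _ => 0)
  | t + 1, ω =>
    let s := exp3State X U t ω
    let h := s.1
    let Yhat := s.2
    let ρ := exp3prob (t + 1) Yhat
    let iE := sampleCat ρ (U 1 t ω)
    let yE := X iE (h iE).length ω
    let h1 := push h iE yE
    let iG := greedyArm h
    let yG := X iG (h1 iG).length ω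
    (push h1 iG yG, fun k => Yhat k + (if k = iE then yE / ρ k else 0))

/-- The arm pulled by EXP3 at timestep `t`. -/
noncomputable def exp3Arm (X : Fin K → ℕ → Ω → ℝ) (U : Fin 2 → ℕ → Ω → ℝ)
    (t : ℕ) (ω : Ω) : Fin K :=
  sampleCat (exp3prob (t + 1) (exp3State X U t ω).2) (U 1 t ω)

/-- The reward received by EXP3 at timestep `t`. -/
noncomputable def exp3Reward (X : Fin K → ℕ → Ω → ℝ) (U : Fin 2 → ℕ → Ω → ℝ)
    (t : ℕ) (ω : Ω) : ℝ :=
  X (exp3Arm X U t ω) (((exp3State X U t ω).1 (exp3Arm X U t ω)).length) ω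

/-- The reward received by the greedy algorithm at timestep `t`, when run jointly with EXP3
under one-way data sharing (EXP3 → grd). -/
noncomputable def exp3GrdReward (X : Fin K → ℕ → Ω → ℝ) (U : Fin 2 → ℕ → Ω → ℝ)
    (t : ℕ) (ω : Ω) : ℝ :=
  let h := (exp3State X U t ω).1
  let h1 := push h (exp3Arm X U t ω) (exp3Reward X U t ω)
  X (greedyArm h) ((h1 (greedyArm h)).length) ω

/-- The expected regret of the greedy algorithm over horizon `T`, when run jointly with
EXP3 under one-way data sharing (EXP3 → grd). -/
noncomputable def exp3GrdExpRegret [MeasurableSpace Ω] (P : Measure Ω)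
    (X : Fin K → ℕ → Ω → ℝ) (U : Fin 2 → ℕ → Ω → ℝ) (μstar : ℝ) (T : ℕ) : ℝ :=
  T * μstar - ∫ ω, (∑ t ∈ Finset.range T, exp3GrdReward X U t ω) ∂P

/-- The expected regret of EXP3 over horizon `T`, when run jointly with the greedy
algorithm under one-way data sharing (EXP3 → grd). -/
noncomputable def exp3ExpRegret [MeasurableSpace Ω] (P : Measure Ω)
    (X : Fin K → ℕ → Ω → ℝ) (U : Fin 2 → ℕ → Ω → ℝ) (μstar : ℝ) (T : ℕ) : ℝ :=
  T * μstar - ∫ ω, (∑ t ∈ Finset.range T, exp3Reward X U t ω) ∂P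


end BanditAB

namespace BanditAB
section Bookkeeping

variable {K : ℕ} [NeZero K] {Ω : Type*}
variable (X : Fin K → ℕ → Ω → ℝ) (U : Fin 2 → ℕ → Ω → ℝ) (A₁ A₂ : Alg K)

lemma push_apply_length (h : Hist K) (k j : Fin K) (y : ℝ) :
    ((push h k y) j).length = (h j).length + if j = k then 1 else 0 := by
  by_cases hj : j = k
  · subst hj; simp [push]
  · simp [push, Function.update_apply, hj]

lemma totalCount_push (h : Hist K) (k : Fin K) (y : ℝ) :
    totalCount (push h k y) = totalCount h + 1 := by
  classical
  unfold totalCount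
  simp only [push_apply_length]
  rw [Finset.sum_add_distrib]
  simp

lemma jointHist_zero (ω : Ω) (k : Fin K) : jointHist X U A₁ A₂ 0 ω k = [] := rfl

lemma jointHist_succ (t : ℕ) (ω : Ω) :
    jointHist X U A₁ A₂ (t + 1) ω =
      (let h := jointHist X U A₁ A₂ t ω
       let i1 := A₁ h (U 0 t ω)
       let h1 := push h i1 (X i1 (h i1).length ω)
       let i2 := A₂ h (U 1 t ω)
       push h1 i2 (X i2 (h1 i2).length ω)) := rfl

lemma totalCount_jointHist (t : ℕ) (ω : Ω) :
    totalCount (jointHist X U A₁ A₂ t ω) = 2 * t := by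
  induction t with
  | zero => simp [totalCount, jointHist]
  | succ t ih =>
      rw [jointHist_succ]
      simp only [totalCount_push, ih]
      ring

lemma length_jointHist_succ (t : ℕ) (ω : Ω) (k : Fin K) :
    (jointHist X U A₁ A₂ (t + 1) ω k).length =
      (jointHist X U A₁ A₂ t ω k).length
        + (if k = arm1 X U A₁ A₂ t ω then 1 else 0)
        + (if k = arm2 X U A₁ A₂ t ω then 1 else 0) := by
  rw [jointHist_succ]
  simp only [push_apply_length]
  rfl

lemma length_jointHist_mono (ω : Ω) (k : Fin K) :
    Monotone (fun t => (jointHist X U A₁ A₂ t ω k).length) := by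
  apply monotone_nat_of_le_succ
  intro t
  rw [length_jointHist_succ]
  omega

lemma length_le_of_arm2 (t : ℕ) (ω : Ω) :
    (jointHist X U A₁ A₂ t ω (arm2 X U A₁ A₂ t ω)).length + 1 ≤
      (jointHist X U A₁ A₂ (t + 1) ω (arm2 X U A₁ A₂ t ω)).length := by
  rw [length_jointHist_succ]
  simp

lemma mem_push (h : Hist K) (i k : Fin K) (y x : ℝ) (hx : x ∈ (push h i y) k) :
    x ∈ h k ∨ (k = i ∧ x = y) := by
  by_cases hk : k = i
  · subst hk
    simp only [push, Function.update_self] at hx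
    rcases List.mem_append.1 hx with hx | hx
    · exact Or.inl hx
    · exact Or.inr ⟨rfl, List.mem_singleton.1 hx⟩
  · simp only [push, Function.update_apply, if_neg hk] at hx
    exact Or.inl hx

lemma mem_jointHist (t : ℕ) (ω : Ω) (k : Fin K) :
    ∀ x ∈ jointHist X U A₁ A₂ t ω k, ∃ s, x = X k s ω := by
  induction t with
  | zero => intro x hx; simp [jointHist] at hx
  | succ t ih =>
      intro x hx
      rw [jointHist_succ] at hx
      rcases mem_push _ _ _ _ _ hx with h2 | h2
      · rcases mem_push _ _ _ _ _ h2 with h1 | h1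
        · exact ih x h1
        · exact ⟨_, by rw [h1.2, h1.1]⟩
      · exact ⟨_, by rw [h2.2, h2.1]⟩

lemma reward_sum_eq (T : ℕ) (ω : Ω) :
    (∑ t ∈ Finset.range T, (reward1 X U A₁ A₂ t ω + reward2 X U A₁ A₂ t ω)) =
      ∑ k : Fin K, ∑ s ∈ Finset.range ((jointHist X U A₁ A₂ T ω k).length), X k s ω := by
  induction T with
  | zero => simp [jointHist]
  | succ T ih =>
      rw [Finset.sum_range_succ, ih]
      have hlen : ∀ k : Fin K, (jointHist X U A₁ A₂ (T+1) ω k).length =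
          (jointHist X U A₁ A₂ T ω k).length
            + ((if k = arm1 X U A₁ A₂ T ω then 1 else 0)
              + (if k = arm2 X U A₁ A₂ T ω then 1 else 0)) := by
        intro k; rw [length_jointHist_succ]; ring
      have key : ∀ k : Fin K,
          ∑ s ∈ Finset.range ((jointHist X U A₁ A₂ (T+1) ω k).length), X k s ω =
            (∑ s ∈ Finset.range ((jointHist X U A₁ A₂ T ω k).length), X k s ω)
            + ((if k = arm1 X U A₁ A₂ T ω then
                  X k ((jointHist X U A₁ A₂ T ω k).length) ω else 0)
              + (if k = arm2 X U A₁ A₂ T ω then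
                  X k ((jointHist X U A₁ A₂ T ω k).length
                    + if k = arm1 X U A₁ A₂ T ω then 1 else 0) ω else 0)) := by
        intro k
        rw [hlen k]
        by_cases h1 : k = arm1 X U A₁ A₂ T ω <;> by_cases h2 : k = arm2 X U A₁ A₂ T ω
        · simp only [if_pos h1, if_pos h2]
          have hn : (jointHist X U A₁ A₂ T ω k).length + (1 + 1)
              = ((jointHist X U A₁ A₂ T ω k).length + 1) + 1 := by omega
          rw [hn, Finset.sum_range_succ, Finset.sum_range_succ]
          ring
        · simp only [if_pos h1, if_neg h2]
          have hn : (jointHist X U A₁ A₂ T ω k).length + (1 + 0)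
              = (jointHist X U A₁ A₂ T ω k).length + 1 := by omega
          rw [hn, Finset.sum_range_succ]
          ring
        · simp only [if_neg h1, if_pos h2]
          have hn : (jointHist X U A₁ A₂ T ω k).length + (0 + 1)
              = (jointHist X U A₁ A₂ T ω k).length + 1 := by omega
          rw [hn, Finset.sum_range_succ]
          simp
        · simp only [if_neg h1, if_neg h2]
          simp
      rw [Finset.sum_congr rfl (fun k _ => key k)]
      rw [Finset.sum_add_distrib, Finset.sum_add_distrib]
      have e1 : (∑ k : Fin K, if k = arm1 X U A₁ A₂ T ω then
          X k ((jointHist X U A₁ A₂ T ω k).length) ω else 0) = reward1 X U A₁ A₂ T ω := by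
        rw [Finset.sum_ite_eq' Finset.univ (arm1 X U A₁ A₂ T ω)
          (fun k => X k ((jointHist X U A₁ A₂ T ω k).length) ω)]
        simp [reward1]
      have e2 : (∑ k : Fin K, if k = arm2 X U A₁ A₂ T ω then
          X k ((jointHist X U A₁ A₂ T ω k).length
            + if k = arm1 X U A₁ A₂ T ω then 1 else 0) ω else 0)
          = reward2 X U A₁ A₂ T ω := by
        rw [Finset.sum_ite_eq' Finset.univ (arm2 X U A₁ A₂ T ω)]
        simp only [Finset.mem_univ, if_true]
        have : reward2 X U A₁ A₂ T ω = X (arm2 X U A₁ A₂ T ω)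
            ((jointHist X U A₁ A₂ T ω (arm2 X U A₁ A₂ T ω)).length
              + if arm2 X U A₁ A₂ T ω = arm1 X U A₁ A₂ T ω then 1 else 0) ω := by
          show X (arm2 X U A₁ A₂ T ω)
              ((push (jointHist X U A₁ A₂ T ω) (arm1 X U A₁ A₂ T ω) (reward1 X U A₁ A₂ T ω))
                (arm2 X U A₁ A₂ T ω)).length ω = _
          rw [push_apply_length]
        rw [this]
      rw [e1, e2]

lemma length_jointHist_eq_pulls (t : ℕ) (ω : Ω) (k : Fin K) :
    (jointHist X U A₁ A₂ t ω k).length =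
      ∑ r ∈ Finset.range t, ((if k = arm1 X U A₁ A₂ r ω then 1 else 0)
        + (if k = arm2 X U A₁ A₂ r ω then 1 else 0)) := by
  induction t with
  | zero => simp [jointHist]
  | succ t ih => rw [Finset.sum_range_succ, ← ih, length_jointHist_succ]; ring

end Bookkeeping

section UCBCombinatorics

variable {K : ℕ} [NeZero K] {Ω : Type*}
variable (X : Fin K → ℕ → Ω → ℝ) (U : Fin 2 → ℕ → Ω → ℝ) (A : Alg K)

/-- The exploration-rate function: `2 log n` for `α = 0`, `2 (n^α - 1)/α` otherwise. -/
noncomputable def gval (α : ℝ) (n : ℕ) : ℝ :=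
  if α = 0 then 2 * Real.log n else 2 * ((n : ℝ) ^ α - 1) / α

lemma ucbWidth_eq_gval (α : ℝ) (n s : ℕ) :
    ucbWidth α n s = Real.sqrt (gval α n / s) := by
  unfold ucbWidth gval
  by_cases hα : α = 0
  · rw [if_pos hα, if_pos hα]
  · rw [if_neg hα, if_neg hα, div_div]

lemma gval_nonneg {α : ℝ} (hα : 0 ≤ α) {n : ℕ} (hn : 1 ≤ n) : 0 ≤ gval α n := by
  unfold gval
  by_cases h : α = 0
  · rw [if_pos h]
    have : (1:ℝ) ≤ (n:ℝ) := by exact_mod_cast hn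
    have := Real.log_nonneg this
    linarith
  · rw [if_neg h]
    have hα' : 0 < α := lt_of_le_of_ne hα (Ne.symm h)
    have h1 : (1:ℝ) ≤ (n:ℝ) ^ α :=
      Real.one_le_rpow (by exact_mod_cast hn) hα
    exact div_nonneg (by linarith) hα'.le

lemma gval_mono {α : ℝ} (hα : 0 ≤ α) {a b : ℕ} (ha : 1 ≤ a) (hab : a ≤ b) :
    gval α a ≤ gval α b := by
  unfold gval
  by_cases h : α = 0
  · rw [if_pos h, if_pos h]
    have h1 : (0:ℝ) < (a:ℝ) := by exact_mod_cast ha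
    have h2 : (a:ℝ) ≤ (b:ℝ) := by exact_mod_cast hab
    have := Real.log_le_log h1 h2
    linarith
  · rw [if_neg h, if_neg h]
    have hα' : 0 < α := lt_of_le_of_ne hα (Ne.symm h)
    have h2 : (a:ℝ) ^ α ≤ (b:ℝ) ^ α :=
      Real.rpow_le_rpow (by positivity) (by exact_mod_cast hab) hα
    exact (div_le_div_iff_of_pos_right hα').2 (by linarith)

lemma empMean_mem {l : List ℝ} (hl : l ≠ []) (h : ∀ x ∈ l, x ∈ Set.Icc (0:ℝ) 1) :
    empMean l ∈ Set.Icc (0:ℝ) 1 := by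
  have hpos : 0 < (l.length : ℝ) := by
    have := List.length_pos_iff.2 hl
    exact_mod_cast this
  have hsum0 : 0 ≤ l.sum := List.sum_nonneg (fun x hx => (h x hx).1)
  have hsum1 : l.sum ≤ (l.length : ℝ) := by
    have := List.sum_le_card_nsmul l 1 (fun x hx => (h x hx).2)
    simpa using this
  constructor
  · exact div_nonneg hsum0 hpos.le
  · rw [show empMean l = l.sum / (l.length : ℝ) from rfl, div_le_one hpos]
    exact hsum1

lemma ucbScore_le_ucbArm (α : ℝ) (h : Hist K) (k : Fin K) :
    ucbScore α h k ≤ ucbScore α h (ucbArm α h) := by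
  unfold ucbArm argmaxArm
  have hne : List.finRange K ≠ [] := by
    have : 0 < K := Nat.pos_of_ne_zero (NeZero.ne K)
    intro hcon
    have := List.length_finRange (n := K)
    rw [hcon] at this
    simp at this
    omega
  obtain ⟨m, hm⟩ : ∃ m, List.argmax (ucbScore α h) (List.finRange K) = some m := by
    rcases Option.eq_none_or_eq_some (List.argmax (ucbScore α h) (List.finRange K)) with h0 | h0
    · exact absurd (List.argmax_eq_none.1 h0) hne
    · exact h0
  rw [hm]
  exact List.le_of_mem_argmax (List.mem_finRange k) hm

lemma arm2_ucb_eq (α : ℝ) (t : ℕ) (ω : Ω) :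
    arm2 X U A (ucb α) t ω = ucbArm α (jointHist X U A (ucb α) t ω) := rfl

/-- When some arm is starved, the UCB player pulls an arm with few samples. -/
lemma ucb_pulls_low {α : ℝ} (hα : 0 ≤ α) (ω : Ω)
    (good : ∀ k s, X k s ω ∈ Set.Icc (0:ℝ) 1) (t L : ℕ) (hL : 1 ≤ L)
    (hg : 4 * (L:ℝ) < gval α (2*t))
    (hex : ∃ k, (jointHist X U A (ucb α) t ω k).length < L) :
    (jointHist X U A (ucb α) t ω (arm2 X U A (ucb α) t ω)).length < 4*L := by
  set h := jointHist X U A (ucb α) t ω with hh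
  rw [arm2_ucb_eq]
  set j := ucbArm α h with hj
  have hsc : ∀ k, ucbScore α h k ≤ ucbScore α h j := fun k => ucbScore_le_ucbArm α h k
  obtain ⟨k, hk⟩ := hex
  have hLpos : (0:ℝ) < 4 * L := by
    have : (1:ℝ) ≤ (L:ℝ) := by exact_mod_cast hL
    linarith
  have h4L : 0 < 4 * L := by omega
  by_cases hkE : h k = []
  · have htop : ucbScore α h j = ⊤ := by
      have := hsc k
      rw [ucbScore, if_pos hkE] at this
      exact top_le_iff.1 this
    have hjE : h j = [] := by
      by_contra hne
      rw [ucbScore, if_neg hne] at htop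
      exact (EReal.coe_ne_top _) htop
    rw [hjE]
    simpa using h4L
  · have hkpos : 0 < (h k).length := List.length_pos_iff.2 hkE
    by_cases hjE : h j = []
    · rw [hjE]; simpa using h4L
    · have hjpos : 0 < (h j).length := List.length_pos_iff.2 hjE
      have hmem : ∀ (i : Fin K), h i ≠ [] → empMean (h i) ∈ Set.Icc (0:ℝ) 1 := by
        intro i hi
        refine empMean_mem hi (fun x hx => ?_)
        obtain ⟨s, rfl⟩ := mem_jointHist X U A (ucb α) t ω i x hx
        exact good i s
      have hmk := hmem k hkE
      have hmj := hmem j hjE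
      have hcomp : empMean (h k) + ucbWidth α (totalCount h) (h k).length ≤
          empMean (h j) + ucbWidth α (totalCount h) (h j).length := by
        have := hsc k
        rw [ucbScore, if_neg hkE, ucbScore, if_neg hjE] at this
        exact_mod_cast this
      have hn : totalCount h = 2*t := totalCount_jointHist X U A (ucb α) t ω
      set G := gval α (2*t) with hG
      have hGpos : 0 < G := lt_trans hLpos hg
      rw [hn, ucbWidth_eq_gval, ucbWidth_eq_gval, ← hG] at hcomp
      -- width at k dominates width at threshold L
      have hwk : Real.sqrt (G / L) ≤ Real.sqrt (G / (h k).length) := by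
        apply Real.sqrt_le_sqrt
        apply div_le_div_of_nonneg_left hGpos.le
        · exact_mod_cast hkpos
        · exact_mod_cast hk.le
      have hkey : Real.sqrt (G / L) ≤ 1 + Real.sqrt (G / (h j).length) := by
        have := hcomp
        have h1 : empMean (h k) ≥ 0 := hmk.1
        have h2 : empMean (h j) ≤ 1 := hmj.2
        nlinarith [hwk]
      by_contra hcj
      push_neg at hcj
      have hwj : Real.sqrt (G / (h j).length) ≤ Real.sqrt (G / (4*L)) := by
        apply Real.sqrt_le_sqrt
        apply div_le_div_of_nonneg_left hGpos.le
        · exact_mod_cast h4L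
        · exact_mod_cast hcj
      have hhalf : Real.sqrt (G / (4*L)) = Real.sqrt (G / L) / 2 := by
        have he : (G / (4*(L:ℝ))) = (G / L) / 4 := by
          rw [div_div]
          ring_nf
        rw [he, Real.sqrt_div (by positivity) 4]
        congr 1
        rw [show (4:ℝ) = 2^2 by norm_num, Real.sqrt_sq (by norm_num : (0:ℝ) ≤ 2)]
      have hsq : Real.sqrt (G / L) ≤ 2 := by
        rw [hhalf] at hwj
        linarith [hkey, hwj]
      have hGL : G / L ≤ 4 := by
        have h0 : 0 ≤ G / L := by positivity
        have := Real.sq_sqrt h0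
        nlinarith [hsq, Real.sqrt_nonneg (G / L)]
      have : G ≤ 4 * L := by
        rw [div_le_iff₀ (by exact_mod_cast hL : (0:ℝ) < (L:ℝ))] at hGL
        linarith
      linarith

/-- Every arm has at least `L` samples at time `T`. -/
lemma counts_ge {α : ℝ} (hα : 0 ≤ α) (ω : Ω)
    (good : ∀ k s, X k s ω ∈ Set.Icc (0:ℝ) 1) (T L : ℕ) (hL : 1 ≤ L)
    (hgT : 4 * (L:ℝ) < gval α T)
    (hwin : K * (4*L) < T - (T+1)/2) :
    ∀ k, L ≤ (jointHist X U A (ucb α) T ω k).length := by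
  intro k0
  by_contra hk0
  push_neg at hk0
  have hT1 : 1 ≤ T := by omega
  set S := Finset.Ico ((T+1)/2) T with hS
  have hmem : ∀ t ∈ S, ((arm2 X U A (ucb α) t ω : Fin K),
      (jointHist X U A (ucb α) t ω (arm2 X U A (ucb α) t ω)).length) ∈
        Finset.univ ×ˢ Finset.range (4*L) := by
    intro t ht
    rw [hS, Finset.mem_Ico] at ht
    have hTt : T ≤ 2 * t := by omega
    have hg : 4 * (L:ℝ) < gval α (2*t) :=
      lt_of_lt_of_le hgT (gval_mono hα hT1 hTt)
    have hex : ∃ k, (jointHist X U A (ucb α) t ω k).length < L := by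
      refine ⟨k0, lt_of_le_of_lt ?_ hk0⟩
      exact length_jointHist_mono X U A (ucb α) ω k0 ht.2.le
    have := ucb_pulls_low X U A hα ω good t L hL hg hex
    simp [Finset.mem_range, this]
  have hinj : Set.InjOn (fun t => ((arm2 X U A (ucb α) t ω : Fin K),
      (jointHist X U A (ucb α) t ω (arm2 X U A (ucb α) t ω)).length)) S := by
    intro t ht t' ht' heq
    simp only [Prod.mk.injEq] at heq
    obtain ⟨harm, hlen⟩ := heq
    by_contra hne
    rcases lt_or_gt_of_ne hne with hlt | hlt
    · have h1 := length_le_of_arm2 X U A (ucb α) t ω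
      have h2 : (jointHist X U A (ucb α) (t+1) ω (arm2 X U A (ucb α) t ω)).length ≤
          (jointHist X U A (ucb α) t' ω (arm2 X U A (ucb α) t ω)).length :=
        length_jointHist_mono X U A (ucb α) ω _ hlt
      rw [← harm] at hlen
      omega
    · have h1 := length_le_of_arm2 X U A (ucb α) t' ω
      have h2 : (jointHist X U A (ucb α) (t'+1) ω (arm2 X U A (ucb α) t' ω)).length ≤
          (jointHist X U A (ucb α) t ω (arm2 X U A (ucb α) t' ω)).length :=
        length_jointHist_mono X U A (ucb α) ω _ hlt
      rw [harm] at hlen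
      omega
  have hcard := Finset.card_le_card_of_injOn _ hmem hinj
  rw [hS, Nat.card_Ico] at hcard
  rw [Finset.card_product, Finset.card_univ, Fintype.card_fin, Finset.card_range] at hcard
  omega

end UCBCombinatorics

section ProbHelpers

lemma exp_le_one_add_add_sq {x : ℝ} (hx : |x| ≤ 1) : Real.exp x ≤ 1 + x + x^2 := by
  have h := Real.exp_bound hx (by norm_num : 0 < 2)
  have hsum : (∑ m ∈ Finset.range 2, x ^ m / m.factorial) = 1 + x := by
    simp [Finset.sum_range_succ]
  rw [hsum] at h
  have h2 : Real.exp x - (1 + x) ≤ |x|^2 * (((2:ℕ).succ : ℝ)/((2:ℕ).factorial * 2)) :=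
    (abs_sub_le_iff.1 h).1
  have h3 : |x|^2 = x^2 := sq_abs x
  have h4 : (((2:ℕ).succ : ℝ)/((2:ℕ).factorial * 2)) = 3/4 := by norm_num [Nat.factorial]
  rw [h3, h4] at h2
  nlinarith [sq_nonneg x]

lemma posPart_le_exp_div {y lam : ℝ} (hlam : 0 < lam) :
    max y 0 ≤ Real.exp (lam * y) / lam := by
  rcases le_or_gt y 0 with hy | hy
  · rw [max_eq_right hy]
    positivity
  · rw [max_eq_left hy.le]
    rw [le_div_iff₀ hlam]
    have := Real.add_one_le_exp (lam * y)
    nlinarith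

lemma geom_tail_sum_le (M : ℕ) {β : ℝ} (hβ : 0 < β) :
    ∑ m ∈ Finset.range M, Real.exp (-β*(m:ℝ)) ≤ (1 - Real.exp (-β))⁻¹ := by
  have hr0 : (0:ℝ) ≤ Real.exp (-β) := (Real.exp_pos _).le
  have hr1 : Real.exp (-β) < 1 := Real.exp_lt_one_iff.2 (by linarith)
  have hrw : ∀ m : ℕ, Real.exp (-β*(m:ℝ)) = (Real.exp (-β))^m := by
    intro m
    rw [mul_comm, ← Real.exp_nat_mul]
  rw [Finset.sum_congr rfl (fun m _ => hrw m)]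
  have hsummable := summable_geometric_of_lt_one hr0 hr1
  have := Summable.sum_le_tsum (Finset.range M) (fun i _ => by positivity) hsummable
  rwa [tsum_geometric_of_lt_one hr0 hr1] at this

end ProbHelpers

section EnvFacts

variable {K : ℕ} [NeZero K] {Ω : Type*} [MeasurableSpace Ω] {P : Measure Ω}
  [IsProbabilityMeasure P]
  {X : Fin K → ℕ → Ω → ℝ} {U : Fin 2 → ℕ → Ω → ℝ} {D : Fin K → Measure ℝ}

lemma IsEnv.measurable_X (hEnv : IsEnv P X U D) (k : Fin K) (s : ℕ) :
    Measurable (X k s) := hEnv.2.2.1 k s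

lemma IsEnv.X_mem_ae (hEnv : IsEnv P X U D) (k : Fin K) (s : ℕ) :
    ∀ᵐ ω ∂P, X k s ω ∈ Set.Icc (0:ℝ) 1 := by
  rw [ae_iff]
  have : {ω | ¬ X k s ω ∈ Set.Icc (0:ℝ) 1} = X k s ⁻¹' (Set.Icc (0:ℝ) 1)ᶜ := rfl
  rw [this, ← Measure.map_apply (hEnv.measurable_X k s) measurableSet_Icc.compl,
    hEnv.2.2.2.2.1 k s]
  exact hEnv.2.1 k

lemma IsEnv.good_ae (hEnv : IsEnv P X U D) :
    ∀ᵐ ω ∂P, ∀ (k : Fin K) (s : ℕ), X k s ω ∈ Set.Icc (0:ℝ) 1 := by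
  rw [ae_all_iff]
  intro k
  rw [ae_all_iff]
  intro s
  exact hEnv.X_mem_ae k s

lemma IsEnv.integrable_X (hEnv : IsEnv P X U D) (k : Fin K) (s : ℕ) :
    Integrable (X k s) P := by
  refine Integrable.mono' (integrable_const 1) (hEnv.measurable_X k s).aestronglyMeasurable ?_
  filter_upwards [hEnv.X_mem_ae k s] with ω hω
  rw [Real.norm_eq_abs, abs_le]
  exact ⟨by linarith [hω.1], hω.2⟩

lemma IsEnv.integral_X (hEnv : IsEnv P X U D) (k : Fin K) (s : ℕ) :
    ∫ ω, X k s ω ∂P = armMean D k := by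
  have : armMean D k = ∫ x, id x ∂(Measure.map (X k s) P) := by
    rw [hEnv.2.2.2.2.1 k s]; rfl
  rw [this, integral_map (hEnv.measurable_X k s).aemeasurable aestronglyMeasurable_id]
  rfl

lemma IsEnv.armMean_mem (hEnv : IsEnv P X U D) (k : Fin K) :
    armMean D k ∈ Set.Icc (0:ℝ) 1 := by
  have hprob : IsProbabilityMeasure (D k) := hEnv.1 k
  have hae : ∀ᵐ x ∂(D k), x ∈ Set.Icc (0:ℝ) 1 := by
    rw [ae_iff]
    exact hEnv.2.1 k
  have hint : Integrable (fun x : ℝ => x) (D k) := by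
    refine Integrable.mono' (integrable_const 1) aestronglyMeasurable_id ?_
    filter_upwards [hae] with x hx
    rw [Real.norm_eq_abs, abs_le]
    exact ⟨by linarith [hx.1], hx.2⟩
  constructor
  · exact integral_nonneg_of_ae (by filter_upwards [hae] with x hx using hx.1)
  · have := integral_mono_ae hint (integrable_const 1)
      (by filter_upwards [hae] with x hx using hx.2)
    simpa [armMean] using this

/-- mgf bound for a bounded random variable with known mean. -/
lemma mgf_le_of_bounded {Z : Ω → ℝ} (hZm : Measurable Z) {c t : ℝ}
    (hb : ∀ᵐ ω ∂P, |Z ω - c| ≤ 1) (hmean : ∫ ω, Z ω ∂P = c) (ht : |t| ≤ 1) :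
    mgf Z P t ≤ Real.exp (t*c + t^2) := by
  have hZint : Integrable Z P := by
    refine Integrable.mono' (integrable_const (|c| + 1)) hZm.aestronglyMeasurable ?_
    filter_upwards [hb] with ω hω
    rw [Real.norm_eq_abs]
    calc |Z ω| = |(Z ω - c) + c| := by ring_nf
    _ ≤ |Z ω - c| + |c| := abs_add_le _ _
    _ ≤ |c| + 1 := by linarith
  have hint2 : Integrable (fun ω => (Z ω - c)^2) P := by
    refine Integrable.mono' (integrable_const 1) ?_ ?_
    · exact ((hZm.sub measurable_const).pow measurable_const).aestronglyMeasurable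
    · filter_upwards [hb] with ω hω
      rw [Real.norm_eq_abs, abs_pow]
      calc |Z ω - c|^2 ≤ 1^2 := by
            apply pow_le_pow_left₀ (abs_nonneg _) hω
      _ = 1 := one_pow 2
  have hintE : Integrable (fun ω => Real.exp (t * Z ω)) P := by
    refine Integrable.mono' (integrable_const (Real.exp (t*c + 1)))
      ((hZm.const_mul t).exp).aestronglyMeasurable ?_
    filter_upwards [hb] with ω hω
    rw [Real.norm_eq_abs, abs_of_pos (Real.exp_pos _), Real.exp_le_exp]
    have : t * Z ω - t * c ≤ 1 := by
      calc t * Z ω - t * c = t * (Z ω - c) := by ring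
      _ ≤ |t * (Z ω - c)| := le_abs_self _
      _ = |t| * |Z ω - c| := abs_mul _ _
      _ ≤ 1 * 1 := mul_le_mul ht hω (abs_nonneg _) (by norm_num)
      _ = 1 := by norm_num
    linarith
  have hintQ : Integrable (fun ω =>
      Real.exp (t*c) * (1 + t*(Z ω - c) + t^2 * (Z ω - c)^2)) P := by
    apply Integrable.const_mul
    apply Integrable.add
    · apply Integrable.add (integrable_const 1)
      exact (hZint.sub (integrable_const c)).const_mul t
    · exact hint2.const_mul (t^2)
  have hmono : mgf Z P t ≤ ∫ ω, Real.exp (t*c) * (1 + t*(Z ω - c) + t^2 * (Z ω - c)^2) ∂P := by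
    rw [mgf]
    refine integral_mono_ae hintE hintQ ?_
    filter_upwards [hb] with ω hω
    have habs : |t * (Z ω - c)| ≤ 1 := by
      rw [abs_mul]
      calc |t| * |Z ω - c| ≤ 1 * 1 := mul_le_mul ht hω (abs_nonneg _) (by norm_num)
      _ = 1 := by norm_num
    have h1 : Real.exp (t * (Z ω - c)) ≤ 1 + t*(Z ω - c) + t^2*(Z ω - c)^2 := by
      have := exp_le_one_add_add_sq habs
      calc Real.exp (t * (Z ω - c)) ≤ 1 + t*(Z ω - c) + (t*(Z ω - c))^2 := this
      _ = 1 + t*(Z ω - c) + t^2*(Z ω - c)^2 := by ring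
    calc Real.exp (t * Z ω) = Real.exp (t*c) * Real.exp (t * (Z ω - c)) := by
          rw [← Real.exp_add]; ring_nf
    _ ≤ Real.exp (t*c) * (1 + t*(Z ω - c) + t^2*(Z ω - c)^2) :=
        mul_le_mul_of_nonneg_left h1 (Real.exp_pos _).le
  have hcalc : ∫ ω, Real.exp (t*c) * (1 + t*(Z ω - c) + t^2 * (Z ω - c)^2) ∂P
      ≤ Real.exp (t*c) * (1 + t^2) := by
    rw [integral_const_mul]
    apply mul_le_mul_of_nonneg_left _ (Real.exp_pos _).le
    have hg0 : Integrable (fun ω => Z ω - c) P := by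
      exact hZint.sub (integrable_const c)
    have hg1 : Integrable (fun ω => t * (Z ω - c)) P := hg0.const_mul t
    have hg2 : Integrable (fun ω => t^2 * (Z ω - c)^2) P := hint2.const_mul (t^2)
    have hg01 : Integrable (fun ω => 1 + t * (Z ω - c)) P := by
      simpa using (integrable_const (1:ℝ)).add hg1
    have hsplit : ∫ ω, (1 + t*(Z ω - c) + t^2 * (Z ω - c)^2) ∂P
        = 1 + t * (∫ ω, (Z ω - c) ∂P) + t^2 * ∫ ω, (Z ω - c)^2 ∂P := by
      rw [integral_add hg01 hg2, integral_add (integrable_const 1) hg1,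
        integral_const_mul, integral_const_mul]
      simp
    rw [hsplit]
    have hz : ∫ ω, (Z ω - c) ∂P = 0 := by
      rw [integral_sub hZint (integrable_const c), hmean]
      simp
    rw [hz]
    have hsq : ∫ ω, (Z ω - c)^2 ∂P ≤ 1 := by
      have := integral_mono_ae hint2 (integrable_const 1) (by
        filter_upwards [hb] with ω hω
        calc (Z ω - c)^2 = |Z ω - c|^2 := (sq_abs _).symm
        _ ≤ 1^2 := pow_le_pow_left₀ (abs_nonneg _) hω 2
        _ = 1 := one_pow 2)
      simpa using this
    nlinarith [sq_nonneg t]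
  have hfinal : Real.exp (t*c) * (1 + t^2) ≤ Real.exp (t*c + t^2) := by
    rw [Real.exp_add]
    apply mul_le_mul_of_nonneg_left _ (Real.exp_pos _).le
    linarith [Real.add_one_le_exp (t^2)]
  linarith

end EnvFacts

section EnvFacts2

variable {K : ℕ} [NeZero K] {Ω : Type*} [MeasurableSpace Ω] {P : Measure Ω}
  [IsProbabilityMeasure P]
  {X : Fin K → ℕ → Ω → ℝ} {U : Fin 2 → ℕ → Ω → ℝ} {D : Fin K → Measure ℝ}

lemma IsEnv.measurable_big (hEnv : IsEnv P X U D) :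
    ∀ i : (Fin K × ℕ) ⊕ (Fin 2 × ℕ),
      Measurable ((Sum.elim (fun p : Fin K × ℕ => X p.1 p.2)
        (fun p : Fin 2 × ℕ => U p.1 p.2)) i) := by
  rintro (p | p)
  · exact hEnv.2.2.1 p.1 p.2
  · exact hEnv.2.2.2.1 p.1 p.2

lemma IsEnv.mgf_sum_arm (hEnv : IsEnv P X U D) (k : Fin K) (F : Finset ℕ) (t : ℝ) :
    mgf (fun ω => ∑ s ∈ F, X k s ω) P t = ∏ s ∈ F, mgf (X k s) P t := by
  classical
  have hindep := hEnv.2.2.2.2.2.2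
  have himg := hindep.mgf_sum (t := t) hEnv.measurable_big
    (F.image (fun s => (Sum.inl (k, s) : (Fin K × ℕ) ⊕ (Fin 2 × ℕ))))
  have hinj : ∀ x ∈ F, ∀ y ∈ F,
      (Sum.inl (k, x) : (Fin K × ℕ) ⊕ (Fin 2 × ℕ)) = Sum.inl (k, y) → x = y := by
    intro x _ y _ h
    simpa using h
  rw [Finset.sum_image hinj, Finset.prod_image hinj] at himg
  have h1 : (∑ s ∈ F, (Sum.elim (fun p : Fin K × ℕ => X p.1 p.2)
      (fun p : Fin 2 × ℕ => U p.1 p.2)) (Sum.inl (k, s))) = (fun ω => ∑ s ∈ F, X k s ω) := by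
    funext ω
    rw [Finset.sum_apply]
    rfl
  rw [h1] at himg
  exact himg

lemma IsEnv.abs_sum_le (hEnv : IsEnv P X U D) (k : Fin K) (F : Finset ℕ) :
    ∀ᵐ ω ∂P, |∑ s ∈ F, (X k s ω - armMean D k)| ≤ (F.card : ℝ) := by
  have hμ := hEnv.armMean_mem k
  filter_upwards [hEnv.good_ae] with ω hω
  calc |∑ s ∈ F, (X k s ω - armMean D k)| ≤ ∑ s ∈ F, |X k s ω - armMean D k| :=
        Finset.abs_sum_le_sum_abs _ _
  _ ≤ ∑ s ∈ F, 1 := by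
      apply Finset.sum_le_sum
      intro s _
      have h1 := hω k s
      rw [abs_le]
      constructor <;> [linarith [h1.1, hμ.2]; linarith [h1.2, hμ.1]]
  _ = (F.card : ℝ) := by simp

lemma IsEnv.integrable_posPart (hEnv : IsEnv P X U D) (k : Fin K) (F : Finset ℕ)
    (ε : ℝ) {σ : ℝ} (hσ : |σ| = 1) :
    Integrable (fun ω =>
      max (σ * (∑ s ∈ F, (X k s ω - armMean D k)) - ε * F.card) 0) P := by
  have hSm : Measurable (fun ω => ∑ s ∈ F, (X k s ω - armMean D k)) := by
    apply Finset.measurable_sum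
    intro s _
    exact (hEnv.measurable_X k s).sub measurable_const
  refine Integrable.mono' (integrable_const ((F.card : ℝ) + |ε| * F.card))
    (((hSm.const_mul σ).sub measurable_const).max measurable_const).aestronglyMeasurable ?_
  filter_upwards [hEnv.abs_sum_le k F] with ω hω
  rw [Real.norm_eq_abs]
  have h1 : σ * (∑ s ∈ F, (X k s ω - armMean D k)) ≤ (F.card : ℝ) := by
    calc σ * _ ≤ |σ * (∑ s ∈ F, (X k s ω - armMean D k))| := le_abs_self _
    _ = |σ| * |∑ s ∈ F, (X k s ω - armMean D k)| := abs_mul _ _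
    _ ≤ 1 * (F.card : ℝ) := by rw [hσ]; simpa using hω
    _ = (F.card : ℝ) := one_mul _
  have h2 : -ε * F.card ≤ |ε| * F.card := by
    have : -ε ≤ |ε| := neg_le_abs ε
    have : (0:ℝ) ≤ (F.card:ℝ) := Nat.cast_nonneg _
    nlinarith [neg_le_abs ε]
  rw [abs_le]
  constructor
  · have : (0:ℝ) ≤ max (σ * (∑ s ∈ F, (X k s ω - armMean D k)) - ε * F.card) 0 :=
      le_max_right _ _
    have h3 : (0:ℝ) ≤ (F.card : ℝ) + |ε| * F.card := by positivity
    linarith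
  · apply max_le _ (by positivity)
    nlinarith

lemma IsEnv.posPart_sum_le (hEnv : IsEnv P X U D) (k : Fin K) (F : Finset ℕ)
    {ε lam : ℝ} (hl0 : 0 < lam) (hl1 : lam ≤ 1) {σ : ℝ} (hσ : σ = 1 ∨ σ = -1) :
    ∫ ω, max (σ * (∑ s ∈ F, (X k s ω - armMean D k)) - ε * F.card) 0 ∂P
      ≤ Real.exp (-(lam * ε - lam^2) * F.card) / lam := by
  classical
  set μk := armMean D k with hμk
  have hμ := hEnv.armMean_mem k
  set c' : ℝ := (F.card : ℝ) with hc'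
  have hc0 : (0:ℝ) ≤ c' := Nat.cast_nonneg _
  set t := lam * σ with ht
  have habsσ : |σ| = 1 := by rcases hσ with h | h <;> rw [h] <;> simp
  have ht1 : |t| ≤ 1 := by
    rw [ht, abs_mul, habsσ, mul_one, abs_of_pos hl0]
    exact hl1
  have hσ2 : t^2 = lam^2 := by rcases hσ with h | h <;> rw [ht, h] <;> ring
  have hSm : Measurable (fun ω => ∑ s ∈ F, (X k s ω - μk)) := by
    apply Finset.measurable_sum
    intro s _
    exact (hEnv.measurable_X k s).sub measurable_const
  -- mgf bounds
  have hmgf_each : ∀ s ∈ F, mgf (X k s) P t ≤ Real.exp (t*μk + t^2) := by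
    intro s _
    refine mgf_le_of_bounded (hEnv.measurable_X k s) ?_ (hEnv.integral_X k s) ht1
    filter_upwards [hEnv.X_mem_ae k s] with ω hω
    rw [abs_le]
    constructor <;> [linarith [hω.1, hμ.2]; linarith [hω.2, hμ.1]]
  have hprod : ∏ s ∈ F, mgf (X k s) P t ≤ Real.exp ((t*μk + t^2) * c') := by
    calc ∏ s ∈ F, mgf (X k s) P t ≤ ∏ _s ∈ F, Real.exp (t*μk + t^2) :=
          Finset.prod_le_prod (fun s _ => mgf_nonneg) hmgf_each
    _ = Real.exp (t*μk + t^2) ^ F.card := by rw [Finset.prod_const]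
    _ = Real.exp ((t*μk + t^2) * c') := by
        rw [hc', ← Real.exp_nat_mul, mul_comm]
  have hmgfS : ∫ ω, Real.exp (t * (∑ s ∈ F, X k s ω)) ∂P ≤ Real.exp ((t*μk + t^2) * c') := by
    calc ∫ ω, Real.exp (t * (∑ s ∈ F, X k s ω)) ∂P = mgf (fun ω => ∑ s ∈ F, X k s ω) P t := rfl
    _ = ∏ s ∈ F, mgf (X k s) P t := hEnv.mgf_sum_arm k F t
    _ ≤ _ := hprod
  -- integrability of exp term
  have hintexp : Integrable (fun ω =>
      Real.exp (lam * (σ * (∑ s ∈ F, (X k s ω - μk)) - ε * c'))) P := by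
    refine Integrable.mono' (integrable_const (Real.exp (lam * (c' + |ε| * c'))))
      ((((hSm.const_mul σ).sub measurable_const).const_mul lam).exp).aestronglyMeasurable ?_
    filter_upwards [hEnv.abs_sum_le k F] with ω hω
    rw [Real.norm_eq_abs, abs_of_pos (Real.exp_pos _), Real.exp_le_exp]
    apply mul_le_mul_of_nonneg_left _ hl0.le
    have h1 : σ * (∑ s ∈ F, (X k s ω - μk)) ≤ c' := by
      calc σ * _ ≤ |σ * (∑ s ∈ F, (X k s ω - μk))| := le_abs_self _
      _ = |σ| * |∑ s ∈ F, (X k s ω - μk)| := abs_mul _ _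
      _ ≤ 1 * c' := by rw [habsσ]; simpa using hω
      _ = c' := one_mul _
    nlinarith [neg_le_abs ε]
  have hintmax := hEnv.integrable_posPart k F ε habsσ
  -- main chain
  have hy : ∀ ω : Ω, lam * (σ * (∑ s ∈ F, (X k s ω - μk)) - ε * c')
      = (-(t * μk * c') - lam * ε * c') + t * (∑ s ∈ F, X k s ω) := by
    intro ω
    have hsub : (∑ s ∈ F, (X k s ω - μk)) = (∑ s ∈ F, X k s ω) - c' * μk := by
      rw [Finset.sum_sub_distrib, Finset.sum_const, hc']
      simp [nsmul_eq_mul]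
    rw [hsub, ht]
    ring
  calc ∫ ω, max (σ * (∑ s ∈ F, (X k s ω - μk)) - ε * c') 0 ∂P
      ≤ ∫ ω, Real.exp (lam * (σ * (∑ s ∈ F, (X k s ω - μk)) - ε * c')) / lam ∂P := by
        refine integral_mono hintmax (hintexp.div_const lam) ?_
        intro ω
        exact posPart_le_exp_div hl0
  _ = (∫ ω, Real.exp (lam * (σ * (∑ s ∈ F, (X k s ω - μk)) - ε * c')) ∂P) / lam :=
        integral_div lam _
  _ = (∫ ω, Real.exp (-(t * μk * c') - lam * ε * c')
        * Real.exp (t * (∑ s ∈ F, X k s ω)) ∂P) / lam := by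
        congr 1
        apply integral_congr_ae
        apply ae_of_all
        intro ω
        dsimp only
        rw [hy ω, Real.exp_add]
  _ = Real.exp (-(t * μk * c') - lam * ε * c')
        * (∫ ω, Real.exp (t * (∑ s ∈ F, X k s ω)) ∂P) / lam := by
        rw [integral_const_mul]
  _ ≤ Real.exp (-(t * μk * c') - lam * ε * c') * Real.exp ((t*μk + t^2) * c') / lam := by
        gcongr
  _ = Real.exp (-(lam * ε - lam^2) * c') / lam := by
        rw [← Real.exp_add]
        congr 2
        linear_combination c' * hσ2

end EnvFacts2

section EnvFacts3

variable {K : ℕ} [NeZero K] {Ω : Type*} [MeasurableSpace Ω] {P : Measure Ω}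
  [IsProbabilityMeasure P]
  {X : Fin K → ℕ → Ω → ℝ} {U : Fin 2 → ℕ → Ω → ℝ} {D : Fin K → Measure ℝ}

lemma IsEnv.sum_posPart_le (hEnv : IsEnv P X U D) (k : Fin K) (M : ℕ) (Fs : ℕ → Finset ℕ)
    (hcard : ∀ m, m < M → (Fs m).card = m) {ε lam : ℝ} (hl0 : 0 < lam) (hl1 : lam ≤ 1)
    (hβ : 0 < lam * ε - lam^2) {σ : ℝ} (hσ : σ = 1 ∨ σ = -1) :
    ∫ ω, (∑ m ∈ Finset.range M,
        max (σ * (∑ s ∈ Fs m, (X k s ω - armMean D k)) - ε * m) 0) ∂P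
      ≤ (1/lam) * (1 - Real.exp (-(lam * ε - lam^2)))⁻¹ := by
  classical
  have habsσ : |σ| = 1 := by rcases hσ with h | h <;> rw [h] <;> simp
  have hterm : ∀ m ∈ Finset.range M, Integrable (fun ω =>
      max (σ * (∑ s ∈ Fs m, (X k s ω - armMean D k)) - ε * m) 0) P := by
    intro m hm
    have := hEnv.integrable_posPart k (Fs m) ε habsσ
    rwa [hcard m (Finset.mem_range.1 hm)] at this
  rw [integral_finset_sum _ hterm]
  calc ∑ m ∈ Finset.range M, ∫ ω,
        max (σ * (∑ s ∈ Fs m, (X k s ω - armMean D k)) - ε * m) 0 ∂P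
      ≤ ∑ m ∈ Finset.range M, Real.exp (-(lam * ε - lam^2) * m) / lam := by
        apply Finset.sum_le_sum
        intro m hm
        have := hEnv.posPart_sum_le k (Fs m) (ε := ε) hl0 hl1 hσ
        rwa [hcard m (Finset.mem_range.1 hm)] at this
  _ = (∑ m ∈ Finset.range M, Real.exp (-(lam * ε - lam^2) * m)) / lam :=
        (Finset.sum_div _ _ _).symm
  _ ≤ (1 - Real.exp (-(lam * ε - lam^2)))⁻¹ / lam := by
        exact div_le_div_of_nonneg_right (geom_tail_sum_le M hβ) hl0.le
  _ = (1/lam) * (1 - Real.exp (-(lam * ε - lam^2)))⁻¹ := by ring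

lemma IsEnv.integral_centered_sum (hEnv : IsEnv P X U D) (k : Fin K) (M : ℕ) :
    ∫ ω, (∑ s ∈ Finset.range M, (X k s ω - armMean D k)) ∂P = 0 := by
  rw [integral_finset_sum _ (fun s _ => by
    exact (hEnv.integrable_X k s).sub (integrable_const (armMean D k)))]
  apply Finset.sum_eq_zero
  intro s _
  rw [integral_sub (hEnv.integrable_X k s) (integrable_const _), hEnv.integral_X k s]
  simp

end EnvFacts3

section RewardMeas

variable {K : ℕ} [NeZero K] {Ω : Type*} [MeasurableSpace Ω] {P : Measure Ω}
  [IsProbabilityMeasure P]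
  {X : Fin K → ℕ → Ω → ℝ} {U : Fin 2 → ℕ → Ω → ℝ} {D : Fin K → Measure ℝ}
  (A₁ A₂ : Alg K)

lemma measurableSet_arm1 (hm1 : ∀ t, Measurable (arm1 X U A₁ A₂ t)) (t : ℕ) (k : Fin K) :
    MeasurableSet {ω | k = arm1 X U A₁ A₂ t ω} := by
  have h : {ω | k = arm1 X U A₁ A₂ t ω} = (arm1 X U A₁ A₂ t) ⁻¹' {k} := by
    ext ω; simp [eq_comm]
  rw [h]
  exact hm1 t (measurableSet_singleton k)

lemma measurableSet_arm2 (hm2 : ∀ t, Measurable (arm2 X U A₁ A₂ t)) (t : ℕ) (k : Fin K) :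
    MeasurableSet {ω | k = arm2 X U A₁ A₂ t ω} := by
  have h : {ω | k = arm2 X U A₁ A₂ t ω} = (arm2 X U A₁ A₂ t) ⁻¹' {k} := by
    ext ω; simp [eq_comm]
  rw [h]
  exact hm2 t (measurableSet_singleton k)

lemma measurable_length (hm1 : ∀ t, Measurable (arm1 X U A₁ A₂ t))
    (hm2 : ∀ t, Measurable (arm2 X U A₁ A₂ t)) (t : ℕ) (k : Fin K) :
    Measurable (fun ω => (jointHist X U A₁ A₂ t ω k).length) := by
  have h : (fun ω => (jointHist X U A₁ A₂ t ω k).length) = fun ω =>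
      ∑ r ∈ Finset.range t, ((if k = arm1 X U A₁ A₂ r ω then 1 else 0)
        + (if k = arm2 X U A₁ A₂ r ω then 1 else 0)) := by
    funext ω
    exact length_jointHist_eq_pulls X U A₁ A₂ t ω k
  rw [h]
  apply Finset.measurable_sum
  intro r _
  apply Measurable.add
  · exact Measurable.ite (measurableSet_arm1 A₁ A₂ hm1 r k) measurable_const measurable_const
  · exact Measurable.ite (measurableSet_arm2 A₁ A₂ hm2 r k) measurable_const measurable_const

lemma reward1_eq_sum (t : ℕ) (ω : Ω) :
    reward1 X U A₁ A₂ t ω = ∑ k : Fin K, ∑ s ∈ Finset.range (2*t+1),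
      if (k = arm1 X U A₁ A₂ t ω ∧ (jointHist X U A₁ A₂ t ω k).length = s)
      then X k s ω else 0 := by
  have hs0 : (jointHist X U A₁ A₂ t ω (arm1 X U A₁ A₂ t ω)).length < 2*t+1 := by
    have h1 : (jointHist X U A₁ A₂ t ω (arm1 X U A₁ A₂ t ω)).length ≤
        totalCount (jointHist X U A₁ A₂ t ω) := by
      apply Finset.single_le_sum (f := fun k => (jointHist X U A₁ A₂ t ω k).length)
        (fun k _ => Nat.zero_le _) (Finset.mem_univ _)
    rw [totalCount_jointHist] at h1
    omega
  rw [Finset.sum_eq_single (arm1 X U A₁ A₂ t ω)]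
  · rw [Finset.sum_eq_single ((jointHist X U A₁ A₂ t ω (arm1 X U A₁ A₂ t ω)).length)]
    · rw [if_pos ⟨rfl, rfl⟩]
      rfl
    · intro s _ hs
      exact if_neg (fun hc => hs hc.2.symm)
    · intro habs
      exact absurd (Finset.mem_range.2 hs0) habs
  · intro k _ hk
    apply Finset.sum_eq_zero
    intro s _
    exact if_neg (fun hc => hk hc.1)
  · intro habs
    exact absurd (Finset.mem_univ _) habs

lemma reward2_eq_sum (t : ℕ) (ω : Ω) :
    reward2 X U A₁ A₂ t ω = ∑ k : Fin K, ∑ s ∈ Finset.range (2*t+2),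
      if (k = arm2 X U A₁ A₂ t ω ∧
          (jointHist X U A₁ A₂ t ω k).length
            + (if k = arm1 X U A₁ A₂ t ω then 1 else 0) = s)
      then X k s ω else 0 := by
  have hr2 : reward2 X U A₁ A₂ t ω = X (arm2 X U A₁ A₂ t ω)
      ((jointHist X U A₁ A₂ t ω (arm2 X U A₁ A₂ t ω)).length
        + (if arm2 X U A₁ A₂ t ω = arm1 X U A₁ A₂ t ω then 1 else 0)) ω := by
    show X (arm2 X U A₁ A₂ t ω)
        ((push (jointHist X U A₁ A₂ t ω) (arm1 X U A₁ A₂ t ω) (reward1 X U A₁ A₂ t ω))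
          (arm2 X U A₁ A₂ t ω)).length ω = _
    rw [push_apply_length]
  have hs0 : (jointHist X U A₁ A₂ t ω (arm2 X U A₁ A₂ t ω)).length
      + (if arm2 X U A₁ A₂ t ω = arm1 X U A₁ A₂ t ω then 1 else 0) < 2*t+2 := by
    have h1 : (jointHist X U A₁ A₂ t ω (arm2 X U A₁ A₂ t ω)).length ≤
        totalCount (jointHist X U A₁ A₂ t ω) := by
      apply Finset.single_le_sum (f := fun k => (jointHist X U A₁ A₂ t ω k).length)
        (fun k _ => Nat.zero_le _) (Finset.mem_univ _)
    rw [totalCount_jointHist] at h1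
    split <;> omega
  rw [Finset.sum_eq_single (arm2 X U A₁ A₂ t ω)]
  · rw [Finset.sum_eq_single ((jointHist X U A₁ A₂ t ω (arm2 X U A₁ A₂ t ω)).length
        + (if arm2 X U A₁ A₂ t ω = arm1 X U A₁ A₂ t ω then 1 else 0))]
    · rw [if_pos ⟨rfl, rfl⟩, hr2]
    · intro s _ hs
      exact if_neg (fun hc => hs hc.2.symm)
    · intro habs
      exact absurd (Finset.mem_range.2 hs0) habs
  · intro k _ hk
    apply Finset.sum_eq_zero
    intro s _
    exact if_neg (fun hc => hk hc.1)
  · intro habs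
    exact absurd (Finset.mem_univ _) habs

lemma measurable_reward1 (hEnv : IsEnv P X U D)
    (hm1 : ∀ t, Measurable (arm1 X U A₁ A₂ t))
    (hm2 : ∀ t, Measurable (arm2 X U A₁ A₂ t)) (t : ℕ) :
    Measurable (reward1 X U A₁ A₂ t) := by
  have h : reward1 X U A₁ A₂ t = fun ω => ∑ k : Fin K, ∑ s ∈ Finset.range (2*t+1),
      if (k = arm1 X U A₁ A₂ t ω ∧ (jointHist X U A₁ A₂ t ω k).length = s)
      then X k s ω else 0 := by
    funext ω
    exact reward1_eq_sum A₁ A₂ t ω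
  rw [h]
  apply Finset.measurable_sum
  intro k _
  apply Finset.measurable_sum
  intro s _
  apply Measurable.ite _ (hEnv.measurable_X k s) measurable_const
  apply MeasurableSet.inter (measurableSet_arm1 A₁ A₂ hm1 t k)
  exact (measurable_length A₁ A₂ hm1 hm2 t k) (measurableSet_singleton s)

lemma measurable_reward2 (hEnv : IsEnv P X U D)
    (hm1 : ∀ t, Measurable (arm1 X U A₁ A₂ t))
    (hm2 : ∀ t, Measurable (arm2 X U A₁ A₂ t)) (t : ℕ) :
    Measurable (reward2 X U A₁ A₂ t) := by
  have h : reward2 X U A₁ A₂ t = fun ω => ∑ k : Fin K, ∑ s ∈ Finset.range (2*t+2),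
      if (k = arm2 X U A₁ A₂ t ω ∧
          (jointHist X U A₁ A₂ t ω k).length
            + (if k = arm1 X U A₁ A₂ t ω then 1 else 0) = s)
      then X k s ω else 0 := by
    funext ω
    exact reward2_eq_sum A₁ A₂ t ω
  rw [h]
  apply Finset.measurable_sum
  intro k _
  apply Finset.measurable_sum
  intro s _
  apply Measurable.ite _ (hEnv.measurable_X k s) measurable_const
  apply MeasurableSet.inter (measurableSet_arm2 A₁ A₂ hm2 t k)
  have hml : Measurable (fun ω => (jointHist X U A₁ A₂ t ω k).length
      + (if k = arm1 X U A₁ A₂ t ω then 1 else 0)) := by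
    apply Measurable.add (measurable_length A₁ A₂ hm1 hm2 t k)
    exact Measurable.ite (measurableSet_arm1 A₁ A₂ hm1 t k) measurable_const measurable_const
  exact hml (measurableSet_singleton s)

lemma reward1_mem_ae (hEnv : IsEnv P X U D) (t : ℕ) :
    ∀ᵐ ω ∂P, reward1 X U A₁ A₂ t ω ∈ Set.Icc (0:ℝ) 1 := by
  filter_upwards [hEnv.good_ae] with ω hω
  exact hω _ _

lemma reward2_mem_ae (hEnv : IsEnv P X U D) (t : ℕ) :
    ∀ᵐ ω ∂P, reward2 X U A₁ A₂ t ω ∈ Set.Icc (0:ℝ) 1 := by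
  filter_upwards [hEnv.good_ae] with ω hω
  exact hω _ _

lemma integrable_reward1 (hEnv : IsEnv P X U D)
    (hm1 : ∀ t, Measurable (arm1 X U A₁ A₂ t))
    (hm2 : ∀ t, Measurable (arm2 X U A₁ A₂ t)) (t : ℕ) :
    Integrable (reward1 X U A₁ A₂ t) P := by
  refine Integrable.mono' (integrable_const 1)
    (measurable_reward1 A₁ A₂ hEnv hm1 hm2 t).aestronglyMeasurable ?_
  filter_upwards [reward1_mem_ae A₁ A₂ hEnv t] with ω hω
  rw [Real.norm_eq_abs, abs_le]
  exact ⟨by linarith [hω.1], hω.2⟩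

lemma integrable_reward2 (hEnv : IsEnv P X U D)
    (hm1 : ∀ t, Measurable (arm1 X U A₁ A₂ t))
    (hm2 : ∀ t, Measurable (arm2 X U A₁ A₂ t)) (t : ℕ) :
    Integrable (reward2 X U A₁ A₂ t) P := by
  refine Integrable.mono' (integrable_const 1)
    (measurable_reward2 A₁ A₂ hEnv hm1 hm2 t).aestronglyMeasurable ?_
  filter_upwards [reward2_mem_ae A₁ A₂ hEnv t] with ω hω
  rw [Real.norm_eq_abs, abs_le]
  exact ⟨by linarith [hω.1], hω.2⟩

end RewardMeas

section KeyBound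

variable {K : ℕ} [NeZero K] {Ω : Type*} [MeasurableSpace Ω] {P : Measure Ω}
  [IsProbabilityMeasure P]
  {X : Fin K → ℕ → Ω → ℝ} {U : Fin 2 → ℕ → Ω → ℝ} {D : Fin K → Measure ℝ}

lemma key_bound (hK : 2 ≤ K)
    (hEnv : IsEnv P X U D) (kstar : Fin K)
    {α : ℝ} (hα0 : 0 ≤ α)
    (A : Alg K) (hm1 : ∀ t, Measurable (arm1 X U A (ucb α) t))
    (hm2 : ∀ t, Measurable (arm2 X U A (ucb α) t))
    {δ ε lam : ℝ}
    (hδle : ∀ k, k ≠ kstar → δ ≤ armMean D kstar - armMean D k)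
    (hδpos : 0 < δ) (hε : ε = δ/4)
    (hl0 : 0 < lam) (hl1 : lam ≤ 1) (hβ : 0 < lam*ε - lam^2)
    (T L : ℕ) (hL : 1 ≤ L) (hgT : 4*(L:ℝ) < gval α T)
    (hwin : K * (4*L) < T - (T+1)/2) :
    (δ/2) * L - (K+1) * ((1/lam) * (1 - Real.exp (-(lam*ε - lam^2)))⁻¹)
      ≤ expRegret1 P X U A (ucb α) (armMean D kstar) T
        + expRegret2 P X U A (ucb α) (armMean D kstar) T := by
  classical
  set μs := armMean D kstar with hμs
  set Cc := (1/lam) * (1 - Real.exp (-(lam*ε - lam^2)))⁻¹ with hCc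
  have hCpos : 0 ≤ Cc := by
    have h1 : Real.exp (-(lam*ε - lam^2)) < 1 := Real.exp_lt_one_iff.2 (by linarith)
    have h2 : 0 < 1 - Real.exp (-(lam*ε - lam^2)) := by linarith
    rw [hCc]
    positivity
  have hint1 : Integrable (fun ω => ∑ t ∈ Finset.range T, reward1 X U A (ucb α) t ω) P :=
    integrable_finset_sum _ (fun t _ => integrable_reward1 A (ucb α) hEnv hm1 hm2 t)
  have hint2 : Integrable (fun ω => ∑ t ∈ Finset.range T, reward2 X U A (ucb α) t ω) P :=
    integrable_finset_sum _ (fun t _ => integrable_reward2 A (ucb α) hEnv hm1 hm2 t)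
  set Φ : Fin K → Ω → ℝ := fun k ω => ∑ m ∈ Finset.range (2*T+1),
      max ((1:ℝ) * (∑ s ∈ Finset.range m, (X k s ω - armMean D k)) - ε*m) 0 with hΦ
  set Ψ : Ω → ℝ := fun ω => ∑ m ∈ Finset.range (2*T+1),
      max ((-1:ℝ) * (∑ s ∈ Finset.Ico (2*T - m) (2*T), (X kstar s ω - μs)) - ε*m) 0 with hΨ
  set W : Ω → ℝ := fun ω => ∑ s ∈ Finset.range (2*T), (X kstar s ω - μs) with hW
  have hintΦ : ∀ k, Integrable (Φ k) P := by
    intro k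
    rw [hΦ]
    apply integrable_finset_sum
    intro m _
    have := hEnv.integrable_posPart k (Finset.range m) ε (σ := 1) (by norm_num)
    rwa [Finset.card_range] at this
  have hintΨ : Integrable Ψ P := by
    rw [hΨ]
    apply integrable_finset_sum
    intro m hm
    have h := hEnv.integrable_posPart kstar (Finset.Ico (2*T - m) (2*T)) ε (σ := -1)
      (by norm_num)
    rw [Nat.card_Ico] at h
    have hmm : 2*T - (2*T - m) = m := by
      have := Finset.mem_range.1 hm; omega
    rwa [hmm] at h
  have hintW : Integrable W P := by
    rw [hW]
    exact integrable_finset_sum _ (fun s _ => by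
      exact (hEnv.integrable_X kstar s).sub (integrable_const μs))
  have hΦle : ∀ k, ∫ ω, Φ k ω ∂P ≤ Cc := by
    intro k
    rw [hΦ, hCc]
    exact hEnv.sum_posPart_le k (2*T+1) (fun m => Finset.range m)
      (fun m _ => Finset.card_range m) hl0 hl1 hβ (σ := 1) (Or.inl rfl)
  have hΨle : ∫ ω, Ψ ω ∂P ≤ Cc := by
    rw [hΨ, hCc]
    exact hEnv.sum_posPart_le kstar (2*T+1) (fun m => Finset.Ico (2*T - m) (2*T))
      (fun m hm => by rw [Nat.card_Ico]; omega) hl0 hl1 hβ (σ := -1) (Or.inr rfl)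
  have hWzero : ∫ ω, W ω ∂P = 0 := by
    rw [hW]
    exact hEnv.integral_centered_sum kstar (2*T)
  set Sfin := (Finset.univ : Finset (Fin K)).erase kstar with hSfin
  have hcardS : Sfin.card = K - 1 := by
    rw [hSfin, Finset.card_erase_of_mem (Finset.mem_univ _), Finset.card_univ,
      Fintype.card_fin]
  have hScard_pos : 0 < Sfin.card := by omega
  set G : Ω → ℝ := fun ω => (δ/2) * L - ((∑ k ∈ Sfin, Φ k ω) + Ψ ω + W ω) with hG
  have hA1 : Integrable (fun ω => ∑ k ∈ Sfin, Φ k ω) P :=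
    integrable_finset_sum _ (fun k _ => hintΦ k)
  have hA2 : Integrable (fun ω => (∑ k ∈ Sfin, Φ k ω) + Ψ ω) P := by
    exact hA1.add hintΨ
  have hA3 : Integrable (fun ω => ((∑ k ∈ Sfin, Φ k ω) + Ψ ω) + W ω) P := by
    exact hA2.add hintW
  have hintG : Integrable G P := by
    rw [hG]
    exact (integrable_const ((δ/2) * (L:ℝ))).sub hA3
  have hGsplit : ∫ ω, G ω ∂P = (δ/2)*L -
      ((∑ k ∈ Sfin, ∫ ω, Φ k ω ∂P) + ∫ ω, Ψ ω ∂P + ∫ ω, W ω ∂P) := by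
    rw [hG, integral_sub (integrable_const _) hA3, integral_const,
      integral_add hA2 hintW, integral_add hA1 hintΨ,
      integral_finset_sum _ (fun k _ => hintΦ k)]
    simp [measure_univ]
  have hGint_val : (δ/2)*L - (K+1) * Cc ≤ ∫ ω, G ω ∂P := by
    rw [hGsplit]
    have hsum : ∑ k ∈ Sfin, ∫ ω, Φ k ω ∂P ≤ (Sfin.card : ℝ) * Cc := by
      calc ∑ k ∈ Sfin, ∫ ω, Φ k ω ∂P ≤ ∑ _k ∈ Sfin, Cc :=
            Finset.sum_le_sum (fun k _ => hΦle k)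
      _ = (Sfin.card : ℝ) * Cc := by rw [Finset.sum_const, nsmul_eq_mul]
    have hcast : ((Sfin.card : ℕ) : ℝ) ≤ (K : ℝ) := by
      rw [hcardS]
      exact_mod_cast Nat.sub_le K 1
    have h1 : (Sfin.card : ℝ) * Cc ≤ (K:ℝ) * Cc := mul_le_mul_of_nonneg_right hcast hCpos
    linarith [hΨle, hWzero.ge, hWzero.le]
  set F : Ω → ℝ := fun ω => 2*(T:ℝ)*μs -
      ((∑ t ∈ Finset.range T, reward1 X U A (ucb α) t ω)
        + (∑ t ∈ Finset.range T, reward2 X U A (ucb α) t ω)) with hF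
  have hintF : Integrable F P := by
    rw [hF]
    exact (integrable_const (2*(T:ℝ)*μs)).sub (by exact hint1.add hint2 :
      Integrable (fun ω => (∑ t ∈ Finset.range T, reward1 X U A (ucb α) t ω)
        + (∑ t ∈ Finset.range T, reward2 X U A (ucb α) t ω)) P)
  have hregret : expRegret1 P X U A (ucb α) μs T + expRegret2 P X U A (ucb α) μs T
      = ∫ ω, F ω ∂P := by
    rw [hF]
    unfold expRegret1 expRegret2
    rw [integral_sub (integrable_const _) (by exact hint1.add hint2 :
        Integrable (fun ω => (∑ t ∈ Finset.range T, reward1 X U A (ucb α) t ω)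
          + (∑ t ∈ Finset.range T, reward2 X U A (ucb α) t ω)) P),
      integral_const, integral_add hint1 hint2]
    simp [measure_univ]
    ring
  have hae : ∀ᵐ ω ∂P, G ω ≤ F ω := by
    filter_upwards [hEnv.good_ae] with ω hgood
    have hcnt : ∀ k, L ≤ (jointHist X U A (ucb α) T ω k).length :=
      counts_ge X U A hα0 ω hgood T L hL hgT hwin
    set n : Fin K → ℕ := fun k => (jointHist X U A (ucb α) T ω k).length with hn
    have hsum2T : ∑ k, n k = 2*T := totalCount_jointHist X U A (ucb α) T ω
    have hrw : (∑ t ∈ Finset.range T, reward1 X U A (ucb α) t ω)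
        + (∑ t ∈ Finset.range T, reward2 X U A (ucb α) t ω)
        = ∑ k, ∑ s ∈ Finset.range (n k), X k s ω := by
      rw [← Finset.sum_add_distrib]
      exact reward_sum_eq X U A (ucb α) T ω
    have hSc : ∀ (k : Fin K) (m : ℕ), ∑ s ∈ Finset.range m, X k s ω
        = (∑ s ∈ Finset.range m, (X k s ω - armMean D k)) + m * armMean D k := by
      intro k m
      rw [Finset.sum_sub_distrib, Finset.sum_const, Finset.card_range, nsmul_eq_mul]
      ring
    set f : Fin K → ℝ := fun k => (n k : ℝ)*(μs - armMean D k)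
        - (∑ s ∈ Finset.range (n k), (X k s ω - armMean D k)) with hf
    have hcastsum : (∑ k, ((n k : ℕ):ℝ)) = 2*(T:ℝ) := by
      exact_mod_cast congrArg (Nat.cast : ℕ → ℝ) hsum2T
    have htot : F ω = ∑ k, f k := by
      rw [hF]
      simp only [hrw, hf]
      rw [Finset.sum_sub_distrib]
      have h2 : ∑ k, (n k : ℝ) * (μs - armMean D k)
          = 2*(T:ℝ)*μs - ∑ k, (n k : ℝ) * armMean D k := by
        have h3 : ∑ k, (n k : ℝ) * (μs - armMean D k)
            = (∑ k, (n k:ℝ)) * μs - ∑ k, (n k : ℝ) * armMean D k := by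
          rw [Finset.sum_mul]
          rw [← Finset.sum_sub_distrib]
          congr 1
          funext k
          ring
        rw [h3, hcastsum]
      rw [h2]
      have h4 : ∑ k, ∑ s ∈ Finset.range (n k), X k s ω
          = (∑ k, (∑ s ∈ Finset.range (n k), (X k s ω - armMean D k)))
            + ∑ k, (n k : ℝ) * armMean D k := by
        rw [← Finset.sum_add_distrib]
        congr 1
        funext k
        rw [hSc k (n k)]
      rw [h4]
      ring
    have hnle2T : ∀ k, n k ≤ 2*T := by
      intro k
      have : n k ≤ ∑ k', n k' :=
        Finset.single_le_sum (f := fun k => n k) (fun _ _ => Nat.zero_le _) (Finset.mem_univ k)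
      omega
    have hSc_le : ∀ k, (∑ s ∈ Finset.range (n k), (X k s ω - armMean D k))
        ≤ ε*(n k) + Φ k ω := by
      intro k
      have hmem : n k ∈ Finset.range (2*T+1) := Finset.mem_range.2 (by
        have := hnle2T k; omega)
      have hle : max ((1:ℝ) * (∑ s ∈ Finset.range (n k), (X k s ω - armMean D k))
          - ε*(n k)) 0 ≤ Φ k ω := by
        rw [hΦ]
        exact Finset.single_le_sum (f := fun m =>
          max ((1:ℝ) * (∑ s ∈ Finset.range m, (X k s ω - armMean D k)) - ε*m) 0)
          (fun m _ => le_max_right _ _) hmem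
      have := le_trans (le_max_left _ _) hle
      linarith
    have hstar_ge : -(ε*(2*(T:ℝ) - (n kstar : ℝ))) - Ψ ω - W ω
        ≤ -(∑ s ∈ Finset.range (n kstar), (X kstar s ω - μs)) := by
      have hnle : n kstar ≤ 2*T := hnle2T kstar
      have hico : ∑ s ∈ Finset.Ico (n kstar) (2*T), (X kstar s ω - μs)
          = (∑ s ∈ Finset.range (2*T), (X kstar s ω - μs))
            - ∑ s ∈ Finset.range (n kstar), (X kstar s ω - μs) :=
        Finset.sum_Ico_eq_sub _ hnle
      have hm₀mem : 2*T - n kstar ∈ Finset.range (2*T+1) := Finset.mem_range.2 (by omega)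
      have hicoeq : Finset.Ico (2*T - (2*T - n kstar)) (2*T) = Finset.Ico (n kstar) (2*T) := by
        congr 1
        omega
      have hle : max ((-1:ℝ) * (∑ s ∈ Finset.Ico (2*T - (2*T - n kstar)) (2*T),
          (X kstar s ω - μs)) - ε*(2*T - n kstar : ℕ)) 0 ≤ Ψ ω := by
        rw [hΨ]
        exact Finset.single_le_sum (f := fun m =>
          max ((-1:ℝ) * (∑ s ∈ Finset.Ico (2*T - m) (2*T), (X kstar s ω - μs)) - ε*m) 0)
          (fun m _ => le_max_right _ _) hm₀mem
      rw [hicoeq] at hle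
      have h1 : (-1:ℝ) * (∑ s ∈ Finset.Ico (n kstar) (2*T), (X kstar s ω - μs))
          - ε*((2*T - n kstar : ℕ):ℝ) ≤ Ψ ω := le_trans (le_max_left _ _) hle
      have hcast : ((2*T - n kstar : ℕ):ℝ) = 2*(T:ℝ) - (n kstar:ℝ) := by
        rw [Nat.cast_sub hnle]
        push_cast
        ring
      rw [hcast] at h1
      have hWω : W ω = ∑ s ∈ Finset.range (2*T), (X kstar s ω - μs) := by rw [hW]
      linarith [hico]
    have hper : ∀ k ∈ Sfin, (δ - ε)*(n k : ℝ) - Φ k ω ≤ f k := by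
      intro k hk
      have hkne : k ≠ kstar := (Finset.mem_erase.1 hk).1
      have h1 : δ ≤ μs - armMean D k := hδle k hkne
      have h2 := hSc_le k
      have h3 : (0:ℝ) ≤ (n k : ℝ) := Nat.cast_nonneg _
      have h4 : δ * (n k:ℝ) ≤ (μs - armMean D k) * (n k:ℝ) :=
        mul_le_mul_of_nonneg_right h1 h3
      show (δ - ε)*(n k : ℝ) - Φ k ω ≤ (n k : ℝ)*(μs - armMean D k)
        - (∑ s ∈ Finset.range (n k), (X k s ω - armMean D k))
      nlinarith
    have hSf : ∑ k ∈ Sfin, ((δ - ε)*(n k:ℝ) - Φ k ω) ≤ ∑ k ∈ Sfin, f k :=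
      Finset.sum_le_sum hper
    have hfstar : -(ε * (∑ k ∈ Sfin, (n k:ℝ))) - Ψ ω - W ω ≤ f kstar := by
      have hNsum : 2*(T:ℝ) - (n kstar:ℝ) = ∑ k ∈ Sfin, (n k : ℝ) := by
        have h1 : (n kstar) + ∑ k ∈ Sfin, n k = 2*T := by
          rw [hSfin, Finset.add_sum_erase _ _ (Finset.mem_univ kstar)]
          exact hsum2T
        have h2 : ((n kstar : ℕ):ℝ) + ∑ k ∈ Sfin, ((n k : ℕ):ℝ) = 2*(T:ℝ) := by
          exact_mod_cast congrArg (Nat.cast : ℕ → ℝ) h1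
        linarith
      have h5 : f kstar = -(∑ s ∈ Finset.range (n kstar), (X kstar s ω - μs)) := by
        rw [hf, hμs]
        simp
      rw [h5, ← hNsum]
      exact hstar_ge
    have hL_le_N : (L:ℝ) ≤ ∑ k ∈ Sfin, (n k:ℝ) := by
      obtain ⟨k₁, hk₁⟩ := Finset.card_pos.1 hScard_pos
      calc (L:ℝ) ≤ ((n k₁ : ℕ):ℝ) := by exact_mod_cast hcnt k₁
      _ ≤ ∑ k ∈ Sfin, (n k:ℝ) :=
          Finset.single_le_sum (f := fun k => ((n k : ℕ):ℝ))
            (fun k _ => Nat.cast_nonneg _) hk₁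
    have hsum_univ : ∑ k, f k = f kstar + ∑ k ∈ Sfin, f k := by
      rw [hSfin, Finset.add_sum_erase _ _ (Finset.mem_univ kstar)]
    have hexpand : ∑ k ∈ Sfin, ((δ - ε)*(n k:ℝ) - Φ k ω)
        = (δ - ε) * (∑ k ∈ Sfin, (n k:ℝ)) - ∑ k ∈ Sfin, Φ k ω := by
      rw [Finset.sum_sub_distrib, Finset.mul_sum]
    rw [hexpand] at hSf
    have hGω : G ω = (δ/2) * L - ((∑ k ∈ Sfin, Φ k ω) + Ψ ω + W ω) := by rw [hG]
    rw [hGω, htot, hsum_univ]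
    set N := ∑ k ∈ Sfin, (n k:ℝ)
    set PhiS := ∑ k ∈ Sfin, Φ k ω
    have hδL : (δ/2) * (L:ℝ) ≤ (δ/2) * N :=
      mul_le_mul_of_nonneg_left hL_le_N (by linarith)
    have hfin : ((δ - ε)*N - PhiS) + (-(ε*N) - Ψ ω - W ω)
        ≤ (∑ k ∈ Sfin, f k) + f kstar := add_le_add hSf hfstar
    have hNe : (δ - ε)*N - ε*N = (δ/2)*N := by rw [hε]; ring
    have hfin2 : (δ/2)*N - PhiS - Ψ ω - W ω ≤ (∑ k ∈ Sfin, f k) + f kstar := by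
      rw [← hNe]
      linarith [hfin]
    linarith [hfin2, hδL]
  calc (δ/2)*L - (K+1)*Cc ≤ ∫ ω, G ω ∂P := hGint_val
  _ ≤ ∫ ω, F ω ∂P := integral_mono_ae hintG hintF hae
  _ = _ := hregret.symm

end KeyBound

lemma gval_le_linear {α : ℝ} (hα0 : 0 ≤ α) (hα1 : α ≤ 1) {T : ℕ} (hT : 1 ≤ T) :
    gval α T ≤ 2*((T:ℝ) - 1) := by
  have hT1 : (1:ℝ) ≤ (T:ℝ) := by exact_mod_cast hT
  unfold gval
  by_cases h : α = 0
  · rw [if_pos h]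
    have := Real.log_le_sub_one_of_pos (by linarith : (0:ℝ) < (T:ℝ))
    linarith
  · rw [if_neg h]
    have hαpos : 0 < α := lt_of_le_of_ne hα0 (Ne.symm h)
    have hTpos : (0:ℝ) < (T:ℝ) := by linarith
    have hbern : (T:ℝ)^α ≤ 1 + α*((T:ℝ) - 1) := by
      have hlog : (T:ℝ)^α = Real.exp (α * Real.log T) := by
        rw [Real.rpow_def_of_pos hTpos, mul_comm]
      have hconv := convexOn_exp.2 (Set.mem_univ (Real.log (T:ℝ))) (Set.mem_univ (0:ℝ))
        hα0 (by linarith : (0:ℝ) ≤ 1 - α) (by ring)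
      rw [smul_eq_mul, smul_eq_mul, smul_eq_mul, smul_eq_mul] at hconv
      calc (T:ℝ)^α = Real.exp (α * Real.log T + (1-α) * 0) := by rw [hlog]; ring_nf
      _ ≤ α * Real.exp (Real.log T) + (1-α) * Real.exp 0 := hconv
      _ = α * T + (1-α) := by rw [Real.exp_log hTpos, Real.exp_zero]; ring
      _ = 1 + α*((T:ℝ)-1) := by ring
    rw [div_le_iff₀ hαpos]
    nlinarith

/-- Proposition 3: when `UCB_α` runs jointly with any other algorithm `A` under data
sharing, the sum of the two expected regrets is `Ω(log T)` if `α = 0` and `Ω(T^α)` if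
`0 < α ≤ 1`. -/
theorem ucb_with_any_sum_regret_lower
    (K : ℕ) [NeZero K] (hK : 2 ≤ K)
    {Ω : Type*} [MeasurableSpace Ω] (P : MeasureTheory.Measure Ω)
    [MeasureTheory.IsProbabilityMeasure P]
    (X : Fin K → ℕ → Ω → ℝ) (U : Fin 2 → ℕ → Ω → ℝ)
    (D : Fin K → MeasureTheory.Measure ℝ) (hEnv : IsEnv P X U D)
    (kstar : Fin K) (hbest : ∀ k : Fin K, k ≠ kstar → armMean D k < armMean D kstar)
    (α : ℝ) (hα0 : 0 ≤ α) (hα1 : α ≤ 1) :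
    ∀ A : Alg K,
      (∀ t, Measurable (arm1 X U A (ucb α) t)) →
      (∀ t, Measurable (arm2 X U A (ucb α) t)) →
      (α = 0 → ∃ c > 0, ∃ T₀ : ℕ, ∀ T : ℕ, T₀ ≤ T →
        c * Real.log T ≤
          expRegret1 P X U A (ucb α) (armMean D kstar) T
            + expRegret2 P X U A (ucb α) (armMean D kstar) T) ∧
      (0 < α → ∃ c > 0, ∃ T₀ : ℕ, ∀ T : ℕ, T₀ ≤ T →
        c * (T : ℝ) ^ α ≤
          expRegret1 P X U A (ucb α) (armMean D kstar) T
            + expRegret2 P X U A (ucb α) (armMean D kstar) T) := by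
  intro A hm1 hm2
  classical
  have hKpos : 0 < K := by omega
  have hKR : (2:ℝ) ≤ (K:ℝ) := by exact_mod_cast hK
  obtain ⟨k₁, hk₁⟩ : ∃ k : Fin K, k ≠ kstar := by
    have h2 : 1 < Fintype.card (Fin K) := by rw [Fintype.card_fin]; omega
    exact Fintype.exists_ne_of_one_lt_card h2 kstar
  set Sfin := (Finset.univ : Finset (Fin K)).erase kstar with hSfin
  have hSne : Sfin.Nonempty := ⟨k₁, Finset.mem_erase.2 ⟨hk₁, Finset.mem_univ _⟩⟩
  set δ := Sfin.inf' hSne (fun k => armMean D kstar - armMean D k) with hδ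
  have hδpos : 0 < δ := by
    rw [hδ, Finset.lt_inf'_iff]
    intro k hk
    exact sub_pos.2 (hbest k (Finset.mem_erase.1 hk).1)
  have hδle : ∀ k, k ≠ kstar → δ ≤ armMean D kstar - armMean D k := by
    intro k hkne
    exact Finset.inf'_le _ (Finset.mem_erase.2 ⟨hkne, Finset.mem_univ _⟩)
  set ε := δ/4 with hε
  have hεpos : 0 < ε := by rw [hε]; linarith
  set lam := min (ε/2) 1 with hlam
  have hl0 : 0 < lam := lt_min (by linarith) one_pos
  have hl1 : lam ≤ 1 := min_le_right _ _
  have hβ : 0 < lam*ε - lam^2 := by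
    have h1 : lam ≤ ε/2 := min_le_left _ _
    nlinarith
  set Cc := (1/lam) * (1 - Real.exp (-(lam*ε - lam^2)))⁻¹ with hCc
  have hCpos : 0 ≤ Cc := by
    have h1 : Real.exp (-(lam*ε - lam^2)) < 1 := Real.exp_lt_one_iff.2 (by linarith)
    have h2 : 0 < 1 - Real.exp (-(lam*ε - lam^2)) := by linarith
    rw [hCc]
    positivity
  set Lf : ℕ → ℕ := fun T => ⌈gval α T / (64*K)⌉₊ with hLf
  -- the common quantitative step
  have setup : ∀ T : ℕ, 8 ≤ gval α T → 32*K + 16 ≤ T →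
      (δ/2) * (Lf T) - (K+1) * Cc ≤
        expRegret1 P X U A (ucb α) (armMean D kstar) T
          + expRegret2 P X U A (ucb α) (armMean D kstar) T := by
    intro T hg8 hTbig
    have hT1 : 1 ≤ T := by omega
    have hgpos : (0:ℝ) < gval α T := by linarith
    have h64K : (0:ℝ) < 64*(K:ℝ) := by positivity
    have hL1 : 1 ≤ Lf T := by
      rw [hLf]
      exact Nat.ceil_pos.2 (by positivity)
    have hLle : (Lf T : ℝ) ≤ gval α T/(64*K) + 1 := by
      rw [hLf]
      exact (Nat.ceil_lt_add_one (by positivity)).le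
    have hLge : gval α T/(64*K) ≤ (Lf T : ℝ) := by
      rw [hLf]
      exact Nat.le_ceil _
    have hgT : 4*((Lf T):ℝ) < gval α T := by
      have h1 : gval α T/(64*(K:ℝ)) ≤ gval α T/16 := by
        apply div_le_div_of_nonneg_left hgpos.le (by norm_num)
        linarith
      have h2 : 4*((Lf T):ℝ) ≤ 4*(gval α T/(64*K) + 1) := by linarith
      have h3 : (4:ℝ) ≤ gval α T / 2 := by linarith
      have h4 : gval α T / 4 + gval α T / 2 < gval α T := by linarith
      calc 4*((Lf T):ℝ) ≤ 4*(gval α T/(64*K)) + 4 := by linarith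
      _ ≤ 4*(gval α T/16) + gval α T/2 := by linarith
      _ = gval α T/4 + gval α T/2 := by ring
      _ < gval α T := h4
    have hwin : K * (4*(Lf T)) < T - (T+1)/2 := by
      have hglin : gval α T ≤ 2*((T:ℝ) - 1) := gval_le_linear hα0 hα1 hT1
      have hnat : T - 2 ≤ 2*(T - (T+1)/2) := by omega
      have hcastw : ((T:ℝ) - 2)/2 ≤ ((T - (T+1)/2 : ℕ) : ℝ) := by
        have h5 : ((T - 2 : ℕ):ℝ) ≤ 2*((T - (T+1)/2 : ℕ) : ℝ) := by
          exact_mod_cast hnat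
        have h6 : (T:ℝ) - 2 ≤ ((T - 2 : ℕ):ℝ) := by
          rw [Nat.cast_sub (by omega : 2 ≤ T)]
          norm_num
        linarith
      have hTR : (32*(K:ℝ) + 16) ≤ (T:ℝ) := by exact_mod_cast hTbig
      have hKcast : (4:ℝ)*(K:ℝ)*((Lf T):ℝ) ≤ gval α T/16 + 4*K := by
        have h7 : (4:ℝ)*(K:ℝ)*((Lf T):ℝ) ≤ 4*K*(gval α T/(64*K) + 1) := by
          apply mul_le_mul_of_nonneg_left hLle (by positivity)
        have h8 : (4:ℝ)*(K:ℝ)*(gval α T/(64*K) + 1) = gval α T/16 + 4*K := by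
          field_simp
          ring
        linarith
      have hfinal : (K:ℝ) * (4*((Lf T):ℝ)) < ((T - (T+1)/2 : ℕ) : ℝ) := by
        have h9 : gval α T/16 + 4*(K:ℝ) ≤ ((T:ℝ)-1)/8 + 4*K := by linarith
        have h10 : ((T:ℝ)-1)/8 + 4*(K:ℝ) < ((T:ℝ) - 2)/2 := by linarith
        calc (K:ℝ) * (4*((Lf T):ℝ)) = 4*(K:ℝ)*((Lf T):ℝ) := by ring
        _ ≤ gval α T/16 + 4*K := hKcast
        _ ≤ ((T:ℝ)-1)/8 + 4*K := h9
        _ < ((T:ℝ) - 2)/2 := h10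
        _ ≤ ((T - (T+1)/2 : ℕ) : ℝ) := hcastw
      exact_mod_cast hfinal
    exact key_bound hK hEnv kstar hα0 A hm1 hm2 hδle hδpos hε hl0 hl1 hβ T (Lf T)
      hL1 hgT hwin
  constructor
  · -- α = 0 : Ω(log T)
    intro hα
    subst hα
    refine ⟨δ/(128*K), by positivity, ?_⟩
    have htend : Filter.Tendsto (fun T : ℕ => Real.log T) Filter.atTop Filter.atTop :=
      Real.tendsto_log_atTop.comp tendsto_natCast_atTop_atTop
    have hev := htend.eventually_ge_atTop (max 4 (128*(K:ℝ)*((K:ℝ)+1)*Cc/δ))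
    obtain ⟨T₀, hT₀⟩ := Filter.eventually_atTop.1
      (hev.and (Filter.eventually_ge_atTop (32*K + 16)))
    refine ⟨T₀, ?_⟩
    intro T hT
    obtain ⟨hlog, hTbig⟩ := hT₀ T hT
    have hlog4 : (4:ℝ) ≤ Real.log T := le_trans (le_max_left _ _) hlog
    have hlogC : 128*(K:ℝ)*((K:ℝ)+1)*Cc/δ ≤ Real.log T := le_trans (le_max_right _ _) hlog
    have hg0 : gval 0 T = 2*Real.log T := by unfold gval; rw [if_pos rfl]
    have hg8 : 8 ≤ gval (0:ℝ) T := by rw [hg0]; linarith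
    have hmain := setup T hg8 hTbig
    have hLge : gval 0 T/(64*(K:ℝ)) ≤ ((Lf T) : ℝ) := by
      rw [hLf]
      exact Nat.le_ceil _
    have h1 : Real.log T/(32*(K:ℝ)) ≤ ((Lf T):ℝ) := by
      rw [hg0] at hLge
      have : 2*Real.log T/(64*(K:ℝ)) = Real.log T/(32*(K:ℝ)) := by
        field_simp
        ring
      linarith
    have h2 : δ*Real.log T/(64*(K:ℝ)) ≤ (δ/2) * ((Lf T):ℝ) := by
      have := mul_le_mul_of_nonneg_left h1 (by linarith : (0:ℝ) ≤ δ/2)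
      calc δ*Real.log T/(64*(K:ℝ)) = (δ/2) * (Real.log T/(32*K)) := by ring
      _ ≤ (δ/2) * ((Lf T):ℝ) := this
    have h3 : ((K:ℝ)+1)*Cc ≤ δ*Real.log T/(128*(K:ℝ)) := by
      rw [div_le_iff₀ hδpos] at hlogC
      have h4 := div_le_div_of_nonneg_right hlogC (by positivity : (0:ℝ) ≤ 128*(K:ℝ))
      have h5 : 128*(K:ℝ)*((K:ℝ)+1)*Cc/(128*(K:ℝ)) = ((K:ℝ)+1)*Cc := by
        field_simp
      rw [h5] at h4
      calc ((K:ℝ)+1)*Cc ≤ Real.log T * δ/(128*(K:ℝ)) := h4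
      _ = δ*Real.log T/(128*(K:ℝ)) := by ring
    calc δ/(128*(K:ℝ)) * Real.log T
        = δ*Real.log T/(64*(K:ℝ)) - δ*Real.log T/(128*(K:ℝ)) := by ring
    _ ≤ (δ/2) * ((Lf T):ℝ) - ((K:ℝ)+1)*Cc := by linarith
    _ ≤ _ := hmain
  · -- 0 < α : Ω(T^α)
    intro hαpos
    refine ⟨δ/(256*K*α), by positivity, ?_⟩
    have htend : Filter.Tendsto (fun T : ℕ => (T:ℝ)^α) Filter.atTop Filter.atTop :=
      (tendsto_rpow_atTop hαpos).comp tendsto_natCast_atTop_atTop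
    have hev := htend.eventually_ge_atTop (max 5 (256*(K:ℝ)*α*((K:ℝ)+1)*Cc/δ))
    obtain ⟨T₀, hT₀⟩ := Filter.eventually_atTop.1
      (hev.and (Filter.eventually_ge_atTop (32*K + 16)))
    refine ⟨T₀, ?_⟩
    intro T hT
    obtain ⟨hpow, hTbig⟩ := hT₀ T hT
    set Apw := (T:ℝ)^α with hApw
    have hA5 : (5:ℝ) ≤ Apw := le_trans (le_max_left _ _) hpow
    have hAR : 256*(K:ℝ)*α*((K:ℝ)+1)*Cc/δ ≤ Apw := le_trans (le_max_right _ _) hpow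
    have hgα : gval α T = 2*(Apw - 1)/α := by
      unfold gval
      rw [if_neg hαpos.ne']
    have hg8 : 8 ≤ gval α T := by
      rw [hgα]
      rw [le_div_iff₀ hαpos]
      nlinarith
    have hmain := setup T hg8 hTbig
    have hLge : gval α T/(64*(K:ℝ)) ≤ ((Lf T) : ℝ) := by
      rw [hLf]
      exact Nat.le_ceil _
    have h1 : δ*Apw/(128*(K:ℝ)*α) ≤ (δ/2) * ((Lf T):ℝ) := by
      have hA2 : Apw/2 ≤ Apw - 1 := by linarith
      have h1a : Apw/2/(32*(K:ℝ)*α) ≤ (Apw - 1)/(32*(K:ℝ)*α) := by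
        apply div_le_div_of_nonneg_right hA2 (by positivity)
      have h1b : gval α T/(64*(K:ℝ)) = (Apw - 1)/(32*(K:ℝ)*α) := by
        rw [hgα, div_div, div_eq_div_iff (by positivity) (by positivity)]
        ring
      have h1c : Apw/2/(32*(K:ℝ)*α) = Apw/(64*(K:ℝ)*α) := by
        rw [div_div]
        congr 1
        ring
      have h1d : Apw/(64*(K:ℝ)*α) ≤ ((Lf T):ℝ) := by
        rw [← h1c]
        calc Apw/2/(32*(K:ℝ)*α) ≤ (Apw - 1)/(32*(K:ℝ)*α) := h1a
        _ = gval α T/(64*(K:ℝ)) := h1b.symm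
        _ ≤ ((Lf T):ℝ) := hLge
      have := mul_le_mul_of_nonneg_left h1d (by linarith : (0:ℝ) ≤ δ/2)
      calc δ*Apw/(128*(K:ℝ)*α) = (δ/2) * (Apw/(64*(K:ℝ)*α)) := by ring
      _ ≤ (δ/2) * ((Lf T):ℝ) := this
    have h3 : ((K:ℝ)+1)*Cc ≤ δ*Apw/(256*(K:ℝ)*α) := by
      rw [div_le_iff₀ hδpos] at hAR
      have h4 := div_le_div_of_nonneg_right hAR (by positivity : (0:ℝ) ≤ 256*(K:ℝ)*α)
      have h5 : 256*(K:ℝ)*α*((K:ℝ)+1)*Cc/(256*(K:ℝ)*α) = ((K:ℝ)+1)*Cc := by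
        field_simp
      rw [h5] at h4
      calc ((K:ℝ)+1)*Cc ≤ Apw * δ/(256*(K:ℝ)*α) := h4
      _ = δ*Apw/(256*(K:ℝ)*α) := by ring
    calc δ/(256*(K:ℝ)*α) * Apw
        = δ*Apw/(128*(K:ℝ)*α) - δ*Apw/(256*(K:ℝ)*α) := by ring
    _ ≤ (δ/2) * ((Lf T):ℝ) - ((K:ℝ)+1)*Cc := by linarith
    _ ≤ _ := hmain

end BanditAB
end

section
/- Fix K ≥ 2, α ∈ [0,1], Δ_min ∈ (0,1], and C ≥ max{80K, 32K/Δ_min²}. For t = K+1, …, T−1, let X_t be independent Bernoulli random variables with P(X_t = 1) = ε_t/K, where ε_t = min{1, C/(2t−2)^{1−α}}, and let N = Σ_{t=K+1}^{T−1} X_t. Then for every T ≥ (C+1)², P( N ≤ (4/Δ_min²) log T ) ≤ 1/T². -/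
open MeasureTheory

lemma tele_log (c : ℝ) (m n : ℕ) (h : m ≤ n) :
    ∑ t ∈ Finset.Icc (m+1) n, (Real.log (t + c) - Real.log ((t:ℝ) - 1 + c))
      = Real.log (n + c) - Real.log (m + c) := by
  rw [← Finset.Ico_add_one_right_eq_Icc, Finset.sum_Ico_eq_sum_range]
  have key : ∀ i ∈ Finset.range (n + 1 - (m + 1)),
      (Real.log (((m+1+i : ℕ):ℝ) + c) - Real.log (((m+1+i : ℕ):ℝ) - 1 + c))
        = (fun j : ℕ => Real.log (((m + j : ℕ) : ℝ) + c)) (i+1)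
          - (fun j : ℕ => Real.log (((m + j : ℕ) : ℝ) + c)) i := by
    intro i _
    simp only
    congr 2 <;> push_cast <;> ring
  rw [Finset.sum_congr rfl key,
    Finset.sum_range_sub (fun j : ℕ => Real.log (((m + j : ℕ) : ℝ) + c))]
  have : m + (n + 1 - (m + 1)) = n := by omega
  rw [this]
  norm_num

lemma log_step (x : ℝ) (hx : 0 < x) : Real.log (x + 1) - Real.log x ≤ 1 / x := by
  rw [← Real.log_div (by positivity) (ne_of_gt hx)]
  have h1 : (x+1)/x = 1 + 1/x := by field_simp
  rw [h1]
  have := Real.log_le_sub_one_of_pos (x := 1 + 1/x) (by positivity)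
  linarith

lemma bern_integral {Ω : Type*} [MeasurableSpace Ω] (P : Measure Ω) [IsProbabilityMeasure P]
    (Y : Ω → ℝ) (hm : Measurable Y) (h01 : ∀ ω, Y ω = 0 ∨ Y ω = 1) :
    ∫ ω, Y ω ∂P = (P {ω | Y ω = 1}).toReal := by
  have hs : MeasurableSet {ω | Y ω = 1} := hm (measurableSet_singleton 1)
  have hind : ∀ ω, Y ω = Set.indicator {ω | Y ω = 1} (fun _ => (1:ℝ)) ω := by
    intro ω
    rcases h01 ω with H | H <;> simp [Set.indicator, Set.mem_setOf_eq, H]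
  calc ∫ ω, Y ω ∂P = ∫ ω, Set.indicator {ω | Y ω = 1} (fun _ => (1:ℝ)) ω ∂P :=
        integral_congr_ae (Filter.Eventually.of_forall hind)
    _ = (P {ω | Y ω = 1}).toReal := by
        rw [integral_indicator_const (1:ℝ) hs]; simp [Measure.real]

lemma bern_integrable {Ω : Type*} [MeasurableSpace Ω] (P : Measure Ω) [IsProbabilityMeasure P]
    (Y : Ω → ℝ) (hm : Measurable Y) (h01 : ∀ ω, Y ω = 0 ∨ Y ω = 1) :
    Integrable Y P := by
  refine (integrable_const (1:ℝ)).mono' hm.aestronglyMeasurable ?_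
  refine Filter.Eventually.of_forall fun ω => ?_
  rcases h01 ω with H | H <;> simp [H]

lemma bern_mgf {Ω : Type*} [MeasurableSpace Ω] (P : Measure Ω) [IsProbabilityMeasure P]
    (Y : Ω → ℝ) (hm : Measurable Y) (h01 : ∀ ω, Y ω = 0 ∨ Y ω = 1) (θ : ℝ) :
    ProbabilityTheory.mgf Y P θ = 1 + (Real.exp θ - 1) * (P {ω | Y ω = 1}).toReal := by
  have hpt : ∀ ω, Real.exp (θ * Y ω) = 1 + (Real.exp θ - 1) * Y ω := by
    intro ω
    rcases h01 ω with H | H <;> simp [H]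
  rw [ProbabilityTheory.mgf]
  calc ∫ ω, Real.exp (θ * Y ω) ∂P = ∫ ω, (1 + (Real.exp θ - 1) * Y ω) ∂P :=
        integral_congr_ae (Filter.Eventually.of_forall hpt)
    _ = 1 + (Real.exp θ - 1) * (P {ω | Y ω = 1}).toReal := by
        rw [integral_add (integrable_const 1) ((bern_integrable P Y hm h01).const_mul _),
          integral_const, integral_const_mul, bern_integral P Y hm h01]
        simp

set_option maxHeartbeats 2000000 in
/-- The number of uniform-exploration pulls of a fixed arm by the ε-greedy algorithm with
exploration probability `ε_t = min {1, C/(2t-2)^(1-α)}` over `K` arms, i.e. the sum `N` of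
independent Bernoulli variables `X_t` with `P(X_t = 1) = ε_t / K` for
`t = K+1, …, T-1`, satisfies `P(N ≤ (4/Δ_min²) log T) ≤ 1/T²` whenever
`K ≥ 2`, `α ∈ [0,1]`, `Δ_min ∈ (0,1]`, `C ≥ max {80K, 32K/Δ_min²}` and `T ≥ (C+1)²`. -/
theorem exploration_pulls_probability_bound
    (K T : ℕ) (hK : 2 ≤ K)
    (α : ℝ) (hα0 : 0 ≤ α) (hα1 : α ≤ 1)
    (Δmin : ℝ) (hΔ0 : 0 < Δmin) (hΔ1 : Δmin ≤ 1)
    (C : ℝ) (hC : max (80 * (K : ℝ)) (32 * K / Δmin ^ 2) ≤ C)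
    {Ω : Type*} [MeasurableSpace Ω] (P : Measure Ω) [IsProbabilityMeasure P]
    (X : ℕ → Ω → ℝ)
    (hmeas : ∀ t, Measurable (X t))
    (h01 : ∀ t ω, X t ω = 0 ∨ X t ω = 1)
    (hdist : ∀ t, K + 1 ≤ t → t ≤ T - 1 →
      P {ω | X t ω = 1}
        = ENNReal.ofReal (min 1 (C / (2 * (t : ℝ) - 2) ^ (1 - α)) / K))
    (hindep : ProbabilityTheory.iIndepFun X P)
    (hT : ((C + 1) ^ 2 : ℝ) ≤ T) :
    (P {ω | (∑ t ∈ Finset.Icc (K + 1) (T - 1), X t ω)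
        ≤ 4 / Δmin ^ 2 * Real.log T}).toReal ≤ 1 / (T : ℝ) ^ 2 := by
  classical
  have hC80 : 80 * (K:ℝ) ≤ C := le_trans (le_max_left _ _) hC
  have hC32 : 32 * (K:ℝ) / Δmin ^ 2 ≤ C := le_trans (le_max_right _ _) hC
  have hKr : (2:ℝ) ≤ (K:ℝ) := by exact_mod_cast hK
  have hC160 : (160:ℝ) ≤ C := by linarith
  have hCpos : (0:ℝ) < C := by linarith
  have hTlarge : (25921:ℝ) ≤ T := le_trans (by nlinarith) hT
  have hT1 : (1:ℝ) < T := by linarith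
  have hTpos : (0:ℝ) < T := by linarith
  have hlogT : 0 < Real.log T := Real.log_pos hT1
  have hKT : K + 3 ≤ T := by
    have h1 : (K:ℝ) + 3 ≤ (T:ℝ) := by nlinarith
    exact_mod_cast h1
  have hcastT1 : ((T - 1 : ℕ) : ℝ) = (T:ℝ) - 1 := by
    rw [Nat.cast_sub (by omega : 1 ≤ T), Nat.cast_one]
  set s : Finset ℕ := Finset.Icc (K + 1) (T - 1) with hsdef
  set θ : ℝ := -Real.log 2 with hθdef
  have hθle : θ ≤ 0 := neg_nonpos.mpr (Real.log_nonneg one_le_two)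
  set a : ℝ := 4 / Δmin ^ 2 * Real.log T with hadef
  -- basic facts about the terms
  have hbase : ∀ t ∈ s, (4:ℝ) ≤ 2*(t:ℝ) - 2 := by
    intro t ht
    have h1 := (Finset.mem_Icc.mp ht).1
    have h2 : (3:ℝ) ≤ (t:ℝ) := by exact_mod_cast (by omega : 3 ≤ t)
    linarith
  have hp_nonneg : ∀ t ∈ s, 0 ≤ min 1 (C / (2 * (t:ℝ) - 2) ^ (1 - α)) / K := by
    intro t ht
    have hb := hbase t ht
    exact div_nonneg (le_min zero_le_one
      (div_nonneg hCpos.le (Real.rpow_nonneg (by linarith) _))) (by positivity)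
  have hp_le_one : ∀ t ∈ s, min 1 (C / (2 * (t:ℝ) - 2) ^ (1 - α)) / K ≤ 1 := by
    intro t ht
    rw [div_le_one (by positivity : (0:ℝ) < (K:ℝ))]
    exact le_trans (min_le_left _ _) (by linarith)
  -- mgf of each term
  have hmgf : ∀ t ∈ s, ProbabilityTheory.mgf (X t) P θ
      = 1 - (min 1 (C / (2 * (t:ℝ) - 2) ^ (1 - α)) / K) / 2 := by
    intro t ht
    obtain ⟨h1, h2⟩ := Finset.mem_Icc.mp ht
    rw [bern_mgf P (X t) (hmeas t) (h01 t) θ, hdist t h1 h2,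
      ENNReal.toReal_ofReal (hp_nonneg t ht)]
    have hexp : Real.exp θ = 1/2 := by
      rw [hθdef, Real.exp_neg, Real.exp_log two_pos]
      norm_num
    rw [hexp]; ring
  -- lower bound on the sum of probabilities
  have hμ : C/(4*(K:ℝ)) * Real.log T
      ≤ ∑ t ∈ s, min 1 (C / (2 * (t:ℝ) - 2) ^ (1 - α)) / K := by
    have step1 : ∀ t ∈ s, (C/(2*(K:ℝ))) * (Real.log ((t:ℝ) + C/2) - Real.log ((t:ℝ) - 1 + C/2))
        ≤ min 1 (C / (2*(t:ℝ)-2)^(1-α)) / K := by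
      intro t ht
      have hb : (4:ℝ) ≤ 2*(t:ℝ)-2 := hbase t ht
      have hx : (0:ℝ) < (t:ℝ) - 1 + C/2 := by linarith
      have hA : C / (2*(t:ℝ)-2) ≤ C / (2*(t:ℝ)-2)^(1-α) := by
        have h1 : (2*(t:ℝ)-2)^(1-α) ≤ (2*(t:ℝ)-2) := by
          calc (2*(t:ℝ)-2)^(1-α) ≤ (2*(t:ℝ)-2)^(1:ℝ) :=
                Real.rpow_le_rpow_of_exponent_le (by linarith) (by linarith)
            _ = 2*(t:ℝ)-2 := Real.rpow_one _
        have h2 : (0:ℝ) < (2*(t:ℝ)-2)^(1-α) := Real.rpow_pos_of_pos (by linarith) _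
        gcongr
      have hB : C / (2*(t:ℝ)-2+C) ≤ min 1 (C / (2*(t:ℝ)-2)) := by
        refine le_min ?_ ?_
        · rw [div_le_one (by linarith)]; linarith
        · gcongr <;> linarith
      have hC' : (C/2) * (Real.log ((t:ℝ)+C/2) - Real.log ((t:ℝ)-1+C/2))
          ≤ C / (2*(t:ℝ)-2+C) := by
        have hls := log_step ((t:ℝ)-1+C/2) hx
        have heq : (t:ℝ)-1+C/2 + 1 = (t:ℝ)+C/2 := by ring
        rw [heq] at hls
        have hrw : C / (2*(t:ℝ)-2+C) = (C/2) * (1/((t:ℝ)-1+C/2)) := by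
          rw [mul_one_div]
          rw [div_eq_div_iff (by linarith) (by linarith)]
          ring
        rw [hrw]
        exact mul_le_mul_of_nonneg_left hls (by linarith)
      have hmin : min 1 (C/(2*(t:ℝ)-2)) ≤ min 1 (C / (2*(t:ℝ)-2)^(1-α)) :=
        min_le_min (le_refl 1) hA
      have hKpos : (0:ℝ) < (K:ℝ) := by linarith
      have hrw2 : (C/(2*(K:ℝ))) * (Real.log ((t:ℝ) + C/2) - Real.log ((t:ℝ) - 1 + C/2))
          = ((C/2) * (Real.log ((t:ℝ) + C/2) - Real.log ((t:ℝ) - 1 + C/2))) / K := by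
        ring
      rw [hrw2]
      exact (div_le_div_iff_of_pos_right hKpos).mpr (le_trans hC' (le_trans hB hmin))
    calc C/(4*(K:ℝ)) * Real.log T = (C/(2*(K:ℝ))) * (Real.log (T:ℝ) / 2) := by ring
      _ ≤ (C/(2*(K:ℝ))) * (Real.log (((T-1:ℕ):ℝ) + C/2) - Real.log ((K:ℝ) + C/2)) := by
          refine mul_le_mul_of_nonneg_left ?_ (by positivity)
          have h1 : Real.log ((K:ℝ) + C/2) ≤ Real.log (T:ℝ) / 2 := by
            have hsq : (K:ℝ) + C/2 ≤ Real.sqrt T := by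
              have h2 : C + 1 ≤ Real.sqrt T := by
                rw [show C + 1 = Real.sqrt ((C+1)^2) from (Real.sqrt_sq (by linarith)).symm]
                exact Real.sqrt_le_sqrt hT
              linarith
            calc Real.log ((K:ℝ) + C/2) ≤ Real.log (Real.sqrt T) :=
                  Real.log_le_log (by positivity) hsq
              _ = Real.log (T:ℝ) / 2 := Real.log_sqrt hTpos.le
          have h2 : Real.log (T:ℝ) ≤ Real.log (((T-1:ℕ):ℝ) + C/2) := by
            apply Real.log_le_log hTpos
            rw [hcastT1]; linarith
          linarith
      _ = ∑ t ∈ s, (C/(2*(K:ℝ))) * (Real.log ((t:ℝ) + C/2) - Real.log ((t:ℝ) - 1 + C/2)) := by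
          rw [← Finset.mul_sum, hsdef, tele_log (C/2) K (T-1) (by omega)]
      _ ≤ ∑ t ∈ s, min 1 (C / (2 * (t:ℝ) - 2) ^ (1 - α)) / K := Finset.sum_le_sum step1
  set M : ℝ := ∑ t ∈ s, min 1 (C / (2 * (t:ℝ) - 2) ^ (1 - α)) / K with hMdef
  -- product bound
  have hmgf_nonneg : ∀ t ∈ s, 0 ≤ ProbabilityTheory.mgf (X t) P θ := by
    intro t ht
    rw [hmgf t ht]
    have := hp_le_one t ht
    linarith
  have hprod : ∏ t ∈ s, ProbabilityTheory.mgf (X t) P θ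
      ≤ Real.exp (-M / 2) := by
    have h1 : ∏ t ∈ s, ProbabilityTheory.mgf (X t) P θ
        ≤ ∏ t ∈ s, Real.exp (-(min 1 (C / (2 * (t:ℝ) - 2) ^ (1 - α)) / K) / 2) := by
      refine Finset.prod_le_prod hmgf_nonneg ?_
      intro t ht
      rw [hmgf t ht]
      have := Real.add_one_le_exp (-(min 1 (C / (2 * (t:ℝ) - 2) ^ (1 - α)) / K) / 2)
      linarith
    refine le_trans h1 (le_of_eq ?_)
    rw [← Real.exp_sum]
    congr 1
    rw [← Finset.sum_div, ← Finset.sum_neg_distrib]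
  -- measurability and integrability of the sum
  have hG : Measurable (fun ω => ∑ t ∈ s, X t ω) :=
    Finset.measurable_sum s (fun t _ => hmeas t)
  have hGnn : ∀ ω, (0:ℝ) ≤ ∑ t ∈ s, X t ω := by
    intro ω
    refine Finset.sum_nonneg fun t _ => ?_
    rcases h01 t ω with H | H <;> simp [H]
  have hintF : Integrable (fun ω => Real.exp (θ * (∑ t ∈ s, X t) ω)) P := by
    simp only [Finset.sum_apply]
    refine (integrable_const (1:ℝ)).mono' ((hG.const_mul θ).exp).aestronglyMeasurable ?_
    refine Filter.Eventually.of_forall fun ω => ?_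
    rw [Real.norm_eq_abs, Real.abs_exp]
    exact Real.exp_le_one_iff.mpr (mul_nonpos_iff.mpr (Or.inr ⟨hθle, hGnn ω⟩))
  have hcher := ProbabilityTheory.measure_le_le_exp_mul_mgf (μ := P)
    (X := ∑ t ∈ s, X t) (t := θ) a hθle hintF
  simp only [Finset.sum_apply] at hcher
  -- final numeric inequality
  have hΔsq : (0:ℝ) < Δmin ^ 2 := by positivity
  have hL : Real.log 2 < 0.6931471808 := Real.log_two_lt_d9
  have hL0 : (0:ℝ) ≤ Real.log 2 := Real.log_nonneg one_le_two
  have hKineq : Real.log 2 * (4/Δmin^2) + 2 ≤ C/(8*(K:ℝ)) := by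
    have h10 : (10:ℝ) ≤ C/(8*(K:ℝ)) := by
      rw [le_div_iff₀ (by positivity)]; linarith
    have h4 : 4/Δmin^2 ≤ C/(8*(K:ℝ)) := by
      rw [div_le_div_iff₀ hΔsq (by positivity)]
      have h32 : 32 * (K:ℝ) ≤ C * Δmin^2 := by
        have := (div_le_iff₀ hΔsq).mp hC32
        linarith
      linarith
    rcases le_total (Δmin^2) (2/5) with h | h
    · have key : Real.log 2 * 4 + 2 * Δmin^2 ≤ 4 := by nlinarith
      calc Real.log 2 * (4/Δmin^2) + 2 = (Real.log 2 * 4 + 2*Δmin^2)/Δmin^2 := by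
            field_simp
        _ ≤ 4/Δmin^2 := (div_le_div_iff_of_pos_right hΔsq).mpr key
        _ ≤ C/(8*(K:ℝ)) := h4
    · have h5 : 4/Δmin^2 ≤ 10 := by
        rw [div_le_iff₀ hΔsq]; linarith
      linarith [mul_le_mul_of_nonneg_left h5 hL0]
  have hexps : Real.log 2 * a - M/2
      ≤ -(2 * Real.log T) := by
    have h8 : C/(8*(K:ℝ)) * Real.log T ≤ M/2 := by
      have heq : C/(8*(K:ℝ)) * Real.log T = (C/(4*(K:ℝ)) * Real.log T)/2 := by ring
      rw [heq]
      linarith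
    have hmul := mul_le_mul_of_nonneg_right hKineq hlogT.le
    rw [hadef]
    linarith
  -- conclusion
  have hsetEq : {ω | (∑ t ∈ s, X t ω) ≤ a} = {ω | (∑ t ∈ s, X t ω) ≤ a} := rfl
  calc (P {ω | (∑ t ∈ s, X t ω) ≤ a}).toReal
      ≤ Real.exp (-θ * a) * ProbabilityTheory.mgf (∑ t ∈ s, X t) P θ := hcher
    _ = Real.exp (Real.log 2 * a) * ∏ t ∈ s, ProbabilityTheory.mgf (X t) P θ := by
        rw [hindep.mgf_sum hmeas s, hθdef, neg_neg]
    _ ≤ Real.exp (Real.log 2 * a) * Real.exp (-M / 2) :=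
        mul_le_mul_of_nonneg_left hprod (Real.exp_pos _).le
    _ = Real.exp (Real.log 2 * a - M / 2) := by
        rw [← Real.exp_add]; ring_nf
    _ ≤ Real.exp (-(2 * Real.log T)) := Real.exp_le_exp.mpr hexps
    _ = 1 / (T:ℝ)^2 := by
        rw [Real.exp_neg, two_mul, Real.exp_add, Real.exp_log hTpos, one_div, sq]
end
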